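/- arXiv:1111.4066 — 9 statements merged into one kernel-verified Lean document; each statement's English description precedes it below -/
import Mathlib

section
/- Let k ≥ 2 be an integer, t_1, …, t_k complex numbers with t_2 ≠ 0, and n ≥ 1. Then det(Q_{k,n}) = F_{k,n+1}(t). -/
open Finset

noncomputable def detH (m : ℕ) (a : ℕ → ℕ → ℂ) : ℂ :=
  Matrix.det (Matrix.of fun i j : Fin m => a (i.1 + 1) (j.1 + 1))

/-- Entry (r,s) (1-based) of the matrix `Q_{k,n}`:
`i^{|r-s|} * t_{r-s+1} / t_2^{r-s}` if `-1 ≤ r-s < k`, and `0` otherwise. -/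
noncomputable def qEntry (k : ℕ) (t : ℤ → ℂ) (r s : ℕ) : ℂ :=
  if -1 ≤ (r : ℤ) - s ∧ (r : ℤ) - s < k then
    Complex.I ^ ((r : ℤ) - s).natAbs * t ((r : ℤ) - s + 1) / t 2 ^ ((r : ℤ) - s)
  else 0

/-- The entry as a function of the difference `r - s`. -/
noncomputable def aEnt (k : ℕ) (t : ℤ → ℂ) (m : ℤ) : ℂ :=
  if -1 ≤ m ∧ m < k then Complex.I ^ m.natAbs * t (m + 1) / t 2 ^ m else 0

/-- The Toeplitz matrix with entries `aEnt (i - j)`. -/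
noncomputable def Amat (k : ℕ) (t : ℤ → ℂ) (n : ℕ) : Matrix (Fin n) (Fin n) ℂ :=
  Matrix.of fun i j => aEnt k t ((i : ℤ) - (j : ℤ))

lemma aEnt_of_lt (k : ℕ) (t : ℤ → ℂ) {m : ℤ} (hm : m < -1) : aEnt k t m = 0 :=
  if_neg (by omega)

lemma aEnt_neg_one (k : ℕ) (t : ℤ → ℂ) (ht0 : t 0 = 1) :
    aEnt k t (-1) = Complex.I * t 2 := by
  rw [aEnt, if_pos ⟨le_rfl, by omega⟩]
  norm_num [ht0]

lemma val_succAbove {n : ℕ} (j : Fin (n + 1)) (c : Fin n) :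
    (j.succAbove c).1 = if c.1 < j.1 then c.1 else c.1 + 1 := by
  rcases lt_or_ge c.castSucc j with h | h
  · rw [Fin.succAbove_of_castSucc_lt _ _ h, if_pos (by simpa [Fin.lt_def] using h)]
    simp
  · rw [Fin.succAbove_of_le_castSucc _ _ h, if_neg (by simp [Fin.le_def] at h; omega),
      Fin.val_succ]

lemma coef (k : ℕ) (t : ℤ → ℂ) (ht2 : t 2 ≠ 0) (m : ℕ) :
    (-1 : ℂ) ^ m * aEnt k t (m : ℤ) * (Complex.I * t 2) ^ m =
      if m < k then t ((m : ℤ) + 1) else 0 := by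
  by_cases h : m < k
  · rw [if_pos h, aEnt, if_pos ⟨by omega, by exact_mod_cast Int.ofNat_lt.mpr h⟩]
    have h1 : ((m : ℤ)).natAbs = m := Int.natAbs_natCast m
    have h2 : t 2 ^ (m : ℤ) = t 2 ^ m := zpow_natCast _ _
    rw [h1, h2]
    have hI : ((-1 : ℂ) * Complex.I * Complex.I) = 1 := by
      rw [mul_assoc, Complex.I_mul_I]; ring
    have hne : t 2 ^ m ≠ 0 := pow_ne_zero _ ht2
    calc (-1 : ℂ) ^ m * (Complex.I ^ m * t ((m : ℤ) + 1) / t 2 ^ m) * (Complex.I * t 2) ^ m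
        = ((-1 : ℂ) * Complex.I * Complex.I) ^ m * t ((m : ℤ) + 1) * (t 2 ^ m / t 2 ^ m) := by
          ring
      _ = t ((m : ℤ) + 1) := by rw [hI, div_self hne]; ring
  · rw [if_neg h, aEnt, if_neg (by push_cast; omega)]
    ring

lemma det_minor (k : ℕ) (t : ℤ → ℂ) (ht0 : t 0 = 1) (n : ℕ) (j : Fin (n + 1)) :
    ((Amat k t (n + 1)).submatrix (Fin.last n).succAbove j.succAbove).det
      = (Amat k t j.1).det * (Complex.I * t 2) ^ (n - j.1) := by
  have hj : j.1 ≤ n := Fin.is_le j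
  have hsum : j.1 + (n - j.1) = n := by omega
  let e : Fin j.1 ⊕ Fin (n - j.1) ≃ Fin n := finSumFinEquiv.trans (finCongr hsum)
  rw [← Matrix.det_submatrix_equiv_self e]
  have hval₁ : ∀ c : Fin j.1, (e (Sum.inl c)).1 = c.1 := by
    intro c; simp [e, finCongr_apply]
  have hval₂ : ∀ c : Fin (n - j.1), (e (Sum.inr c)).1 = j.1 + c.1 := by
    intro c; simp [e, finCongr_apply]
  have hrowv : ∀ x : Fin n, (((Fin.last n).succAbove x) : ℕ) = x.1 := by
    intro x; rw [Fin.succAbove_last]; simp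
  have hcolv : ∀ x : Fin n, ((j.succAbove x) : ℕ) = if x.1 < j.1 then x.1 else x.1 + 1 :=
    val_succAbove j
  have hM : (((Amat k t (n + 1)).submatrix (Fin.last n).succAbove j.succAbove).submatrix e e)
      = Matrix.fromBlocks (Amat k t j.1) 0
          (Matrix.of fun (r : Fin (n - j.1)) (s : Fin j.1) =>
            aEnt k t ((j.1 : ℤ) + r.1 - s.1))
          (Matrix.of fun (r s : Fin (n - j.1)) => aEnt k t ((r.1 : ℤ) - s.1 - 1)) := by
    ext i c
    rcases i with i | i <;> rcases c with c | c <;>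
      simp only [Matrix.submatrix_apply, Matrix.fromBlocks_apply₁₁, Matrix.fromBlocks_apply₁₂,
        Matrix.fromBlocks_apply₂₁, Matrix.fromBlocks_apply₂₂, Matrix.of_apply, Matrix.zero_apply,
        Amat, hrowv, hcolv, hval₁, hval₂]
    · congr 1
      rw [if_pos c.2]
    · rw [if_neg (by omega)]
      exact aEnt_of_lt k t (by have h1 := i.2; push_cast; omega)
    · congr 1
      rw [if_pos c.2]
      push_cast; ring
    · congr 1
      rw [if_neg (by omega)]
      push_cast; ring
  rw [hM, Matrix.det_fromBlocks_zero₁₂]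
  congr 1
  have hD : (Matrix.of fun (r s : Fin (n - j.1)) => aEnt k t ((r.1 : ℤ) - s.1 - 1)).det
      = ∏ i : Fin (n - j.1), aEnt k t (-1) := by
    rw [Matrix.det_of_lowerTriangular]
    · exact Finset.prod_congr rfl fun i _ => by norm_num
    · intro a b hab
      simp only [OrderDual.toDual_lt_toDual] at hab
      exact aEnt_of_lt k t (by have : a.1 < b.1 := hab; push_cast; omega)
  rw [hD, aEnt_neg_one k t ht0, Finset.prod_const, Finset.card_univ, Fintype.card_fin]

theorem det_Q_eq_genFibPoly (k : ℕ) (hk : 2 ≤ k) (t : ℤ → ℂ) (ht0 : t 0 = 1) (ht2 : t 2 ≠ 0)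
    (F : ℤ → ℂ) (hFneg : ∀ n : ℤ, n < 1 → F n = 0) (hF1 : F 1 = 1)
    (hFrec : ∀ n : ℤ, 1 ≤ n →
      F (n + 1) = ∑ j ∈ Finset.Icc (1 : ℤ) (k : ℤ), t j * F (n + 1 - j))
    (n : ℕ) (hn : 1 ≤ n) :
    detH n (qEntry k t) = F ((n : ℤ) + 1) := by
  -- reduce to the Toeplitz matrix
  have hQA : ∀ m : ℕ, detH m (qEntry k t) = (Amat k t m).det := by
    intro m
    unfold detH Amat
    congr 1
    ext i j
    have h : ((i.1 + 1 : ℕ) : ℤ) - ((j.1 + 1 : ℕ) : ℤ) = (i.1 : ℤ) - j.1 := by push_cast; ring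
    simp only [Matrix.of_apply, qEntry, aEnt, h]
  rw [hQA]
  clear hQA hn
  induction n using Nat.strong_induction_on with
  | _ n ih =>
    match n with
    | 0 => simp [Amat, Matrix.det_fin_zero, hF1]
    | Nat.succ n =>
      rw [Matrix.det_succ_row (Amat k t (n + 1)) (Fin.last n)]
      have hterm : ∀ j : Fin (n + 1),
          (-1 : ℂ) ^ ((Fin.last n).1 + j.1) * Amat k t (n + 1) (Fin.last n) j *
              ((Amat k t (n + 1)).submatrix (Fin.last n).succAbove j.succAbove).det
            = (if n - j.1 < k then t (((n - j.1 : ℕ) : ℤ) + 1) else 0) * F ((j.1 : ℤ) + 1) := by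
        intro j
        have hj : j.1 ≤ n := Fin.is_le j
        rw [det_minor k t ht0 n j]
        have hA : Amat k t (n + 1) (Fin.last n) j = aEnt k t ((n - j.1 : ℕ) : ℤ) := by
          simp only [Amat, Matrix.of_apply]
          congr 1
          simp only [Fin.val_last]
          push_cast [Nat.cast_sub hj]
          ring
        have hsign : (-1 : ℂ) ^ ((Fin.last n).1 + j.1) = (-1 : ℂ) ^ (n - j.1) := by
          simp only [Fin.val_last]
          rw [show n + j.1 = (n - j.1) + 2 * j.1 by omega, pow_add, pow_mul]
          norm_num
        rw [hA, hsign, ih j.1 (by omega)]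
        have := coef k t ht2 (n - j.1)
        calc (-1 : ℂ) ^ (n - j.1) * aEnt k t ((n - j.1 : ℕ) : ℤ) *
              (F ((j.1 : ℤ) + 1) * (Complex.I * t 2) ^ (n - j.1))
            = ((-1 : ℂ) ^ (n - j.1) * aEnt k t ((n - j.1 : ℕ) : ℤ) *
                (Complex.I * t 2) ^ (n - j.1)) * F ((j.1 : ℤ) + 1) := by ring
          _ = _ := by rw [this]
      rw [Finset.sum_congr rfl fun j _ => hterm j]
      -- turn into a range sum and reflect
      have hsum1 : ∑ j : Fin (n + 1),
          (if n - j.1 < k then t (((n - j.1 : ℕ) : ℤ) + 1) else 0) * F ((j.1 : ℤ) + 1)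
          = ∑ j ∈ Finset.range (n + 1),
              (if j < k then t ((j : ℤ) + 1) else 0) * F ((n : ℤ) - j + 1) := by
        rw [Fin.sum_univ_eq_sum_range
          (fun j => (if n - j < k then t (((n - j : ℕ) : ℤ) + 1) else 0) * F ((j : ℤ) + 1))]
        rw [← Finset.sum_range_reflect]
        refine Finset.sum_congr rfl fun j hj => ?_
        rw [Finset.mem_range] at hj
        have h1 : n + 1 - 1 - j = n - j := by omega
        have h2 : n - (n - j) = j := by omega
        rw [h1, h2]
        congr 2
        push_cast [Nat.cast_sub (by omega : j ≤ n)]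
        ring
      rw [hsum1]
      -- the recursion for F
      have hrec := hFrec ((n : ℤ) + 1) (by omega)
      have hIcc : ∑ i ∈ Finset.Icc (1 : ℤ) (k : ℤ), t i * F ((n : ℤ) + 1 + 1 - i)
          = ∑ j ∈ Finset.range k, t ((j : ℤ) + 1) * F ((n : ℤ) - j + 1) := by
        refine Finset.sum_nbij' (fun i => (i - 1).toNat) (fun j => (j : ℤ) + 1)
          ?_ ?_ ?_ ?_ ?_
        · intro a ha
          simp only [Finset.mem_Icc] at ha
          simp only [Finset.mem_range]
          omega
        · intro a ha
          simp only [Finset.mem_range] at ha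
          simp only [Finset.mem_Icc]
          omega
        · intro a ha
          simp only [Finset.mem_Icc] at ha
          show ((a - 1).toNat : ℤ) + 1 = a
          omega
        · intro a _
          show ((a : ℤ) + 1 - 1).toNat = a
          omega
        · intro a ha
          simp only [Finset.mem_Icc] at ha
          have h1 : (((a - 1).toNat : ℤ)) = a - 1 := by omega
          rw [h1]
          congr 2 <;> ring
      -- compare the two range sums via a common extension
      set N := max (n + 1) k with hN
      have h1 : ∑ j ∈ Finset.range (n + 1),
          (if j < k then t ((j : ℤ) + 1) else 0) * F ((n : ℤ) - j + 1)
          = ∑ j ∈ Finset.range N,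
              (if j < k then t ((j : ℤ) + 1) else 0) * F ((n : ℤ) - j + 1) := by
        refine Finset.sum_subset (Finset.range_subset_range.mpr (le_max_left _ _)) ?_
        intro x _ hx
        rw [Finset.mem_range, not_lt] at hx
        rw [hFneg _ (by omega), mul_zero]
      have h2 : ∑ j ∈ Finset.range k, t ((j : ℤ) + 1) * F ((n : ℤ) - j + 1)
          = ∑ j ∈ Finset.range N,
              (if j < k then t ((j : ℤ) + 1) else 0) * F ((n : ℤ) - j + 1) := by
        rw [Finset.sum_congr rfl fun j hj =>
          (by rw [if_pos (Finset.mem_range.mp hj)] :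
            (if j < k then t ((j : ℤ) + 1) else 0) * F ((n : ℤ) - j + 1)
              = t ((j : ℤ) + 1) * F ((n : ℤ) - j + 1)).symm]
        refine Finset.sum_subset (Finset.range_subset_range.mpr (le_max_right _ _)) ?_
        intro x _ hx
        rw [Finset.mem_range, not_lt] at hx
        rw [if_neg (by omega), zero_mul]
      rw [h1, ← h2, ← hIcc, ← hrec]
      congr 1
end

section
/- Let k ≥ 2 be an integer and n ≥ 1, and let C_{k,n} = (c_{rs}) be the n×n complex matrix with c_{rs} = i^{|r−s|} if −1 ≤ r−s < k and c_{rs} = 0 otherwise (1 ≤ r,s ≤ n), where i = √−1. Then det(C_{k,n}) = f_{k,k+n−1}. -/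
open Finset

/-- Entry (r,s) (1-based) of the matrix `C_{k,n}`:
`i^{|r-s|}` if `-1 ≤ r-s < k`, and `0` otherwise. -/
noncomputable def cEntry (k : ℕ) (r s : ℕ) : ℂ :=
  if -1 ≤ (r : ℤ) - s ∧ (r : ℤ) - s < k then
    Complex.I ^ ((r : ℤ) - s).natAbs
  else 0

lemma cEntry_shift (k r s : ℕ) : cEntry k (r + 1) (s + 1) = cEntry k r s := by
  unfold cEntry
  have h : ((r + 1 : ℕ) : ℤ) - ((s + 1 : ℕ) : ℤ) = (r : ℤ) - s := by push_cast; ring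
  rw [h]

lemma coe_succAbove {n : ℕ} (i : Fin (n + 1)) (a : Fin n) :
    ((i.succAbove a : Fin (n + 1)) : ℕ) =
      if (a : ℕ) < (i : ℕ) then (a : ℕ) else (a : ℕ) + 1 := by
  rcases lt_or_ge (a.castSucc) i with h | h
  · rw [Fin.succAbove_of_castSucc_lt _ _ h, Fin.coe_castSucc, if_pos]
    exact h
  · rw [Fin.succAbove_of_le_castSucc _ _ h, Fin.val_succ, if_neg]
    have := Fin.le_iff_val_le_val.mp h
    simpa using this

lemma det_minor_s2 (k : ℕ) : ∀ i n : ℕ, i ≤ n →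
    (Matrix.of fun a b : Fin n =>
      cEntry k ((if (a : ℕ) < i then (a : ℕ) else (a : ℕ) + 1) + 1) ((b : ℕ) + 2)).det
      = Complex.I ^ i * detH (n - i) (cEntry k) := by
  intro i
  induction i with
  | zero =>
    intro n _
    simp only [pow_zero, one_mul, Nat.sub_zero]
    unfold detH
    congr 1
    ext a b
    simp only [Matrix.of_apply, Nat.not_lt_zero, if_false]
    have h2 := cEntry_shift k ((a : ℕ) + 1) ((b : ℕ) + 1)
    convert h2 using 2 <;> omega
  | succ i ih =>
    intro n hn
    cases n with
    | zero => omega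
    | succ m =>
      rw [Matrix.det_succ_row_zero]
      rw [Fintype.sum_eq_single (0 : Fin (m + 1)) ?side]
      case side =>
        intro j hj
        have hjv : (j : ℕ) ≠ 0 := fun h => hj (Fin.ext h)
        have hA0 : (Matrix.of fun a b : Fin (m + 1) =>
            cEntry k ((if (a : ℕ) < i + 1 then (a : ℕ) else (a : ℕ) + 1) + 1)
              ((b : ℕ) + 2)) 0 j = 0 := by
          simp only [Matrix.of_apply]
          rw [if_pos (by simp)]
          simp only [Fin.val_zero]
          unfold cEntry
          rw [if_neg]
          rintro ⟨h1, -⟩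
          push_cast at h1
          omega
        rw [hA0]; ring
      · -- main term j = 0
        have hA00 : (Matrix.of fun a b : Fin (m + 1) =>
            cEntry k ((if (a : ℕ) < i + 1 then (a : ℕ) else (a : ℕ) + 1) + 1)
              ((b : ℕ) + 2)) 0 0 = Complex.I := by
          simp only [Matrix.of_apply]
          rw [if_pos (by simp)]
          simp only [Fin.val_zero]
          unfold cEntry
          rw [if_pos ⟨by norm_num, by omega⟩]
          norm_num
        have hsub : ((Matrix.of fun a b : Fin (m + 1) =>
            cEntry k ((if (a : ℕ) < i + 1 then (a : ℕ) else (a : ℕ) + 1) + 1)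
              ((b : ℕ) + 2)).submatrix Fin.succ (Fin.succAbove 0)).det
            = Complex.I ^ i * detH (m - i) (cEntry k) := by
          rw [← ih m (by omega)]
          congr 1
          ext a b
          simp only [Matrix.submatrix_apply, Matrix.of_apply, Fin.succAbove_zero,
            Fin.val_succ]
          have hidx : (if (a : ℕ) + 1 < i + 1 then (a : ℕ) + 1 else (a : ℕ) + 1 + 1)
              = (if (a : ℕ) < i then (a : ℕ) else (a : ℕ) + 1) + 1 := by
            split <;> split <;> omega
          rw [hidx]
          have := cEntry_shift k ((if (a : ℕ) < i then (a : ℕ) else (a : ℕ) + 1) + 1)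
            ((b : ℕ) + 2)
          convert this using 2 <;> omega
        rw [hA00, hsub]
        have : Nat.succ m - Nat.succ i = m - i := by omega
        rw [this]
        simp [pow_succ]
        ring

lemma D_rec (k n : ℕ) :
    detH (n + 1) (cEntry k) =
      ∑ i ∈ range (min k (n + 1)), detH (n - i) (cEntry k) := by
  unfold detH
  rw [Matrix.det_succ_column_zero]
  have hterm : ∀ i : Fin (n + 1),
      (-1 : ℂ) ^ (i : ℕ) *
        (Matrix.of fun a b : Fin (n + 1) => cEntry k ((a : ℕ) + 1) ((b : ℕ) + 1)) i 0 *
        ((Matrix.of fun a b : Fin (n + 1) => cEntry k ((a : ℕ) + 1) ((b : ℕ) + 1)).submatrix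
          i.succAbove Fin.succ).det
      = if (i : ℕ) < k then detH (n - (i : ℕ)) (cEntry k) else 0 := by
    intro i
    have hsub : ((Matrix.of fun a b : Fin (n + 1) =>
        cEntry k ((a : ℕ) + 1) ((b : ℕ) + 1)).submatrix i.succAbove Fin.succ).det
        = Complex.I ^ (i : ℕ) * detH (n - (i : ℕ)) (cEntry k) := by
      rw [← det_minor_s2 k i n (by omega)]
      congr 1
      ext a b
      simp only [Matrix.submatrix_apply, Matrix.of_apply, Fin.val_succ, coe_succAbove]
    have hA : (Matrix.of fun a b : Fin (n + 1) =>
        cEntry k ((a : ℕ) + 1) ((b : ℕ) + 1)) i 0 =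
        if (i : ℕ) < k then Complex.I ^ (i : ℕ) else 0 := by
      simp only [Matrix.of_apply, Fin.val_zero]
      unfold cEntry
      by_cases hik : (i : ℕ) < k
      · rw [if_pos ⟨by push_cast; omega, by push_cast; omega⟩, if_pos hik]
        congr 1
        push_cast
        simp
      · rw [if_neg, if_neg hik]
        rintro ⟨-, h2⟩
        push_cast at h2
        omega
    rw [hA, hsub]
    by_cases hik : (i : ℕ) < k
    · rw [if_pos hik, if_pos hik]
      have hpow : (-1 : ℂ) ^ (i : ℕ) * Complex.I ^ (i : ℕ) * Complex.I ^ (i : ℕ) = 1 := by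
        rw [← mul_pow, ← mul_pow]
        norm_num [Complex.I_mul_I]
      calc (-1 : ℂ) ^ (i : ℕ) * Complex.I ^ (i : ℕ) *
            (Complex.I ^ (i : ℕ) * detH (n - (i : ℕ)) (cEntry k))
          = ((-1 : ℂ) ^ (i : ℕ) * Complex.I ^ (i : ℕ) * Complex.I ^ (i : ℕ)) *
            detH (n - (i : ℕ)) (cEntry k) := by ring
        _ = detH (n - (i : ℕ)) (cEntry k) := by rw [hpow, one_mul]
    · rw [if_neg hik, if_neg hik]; ring
  rw [Finset.sum_congr rfl fun i _ => hterm i]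
  rw [Fin.sum_univ_eq_sum_range (fun i => if i < k then detH (n - i) (cEntry k) else 0)]
  rw [← Finset.sum_filter]
  congr 1
  ext x
  simp [lt_min_iff, and_comm]

theorem det_C_eq_genFib (k : ℕ) (hk : 2 ≤ k)
    (f : ℤ → ℂ) (hf0 : ∀ n : ℤ, 1 ≤ n → n ≤ (k : ℤ) - 2 → f n = 0)
    (hfk1 : f ((k : ℤ) - 1) = 1) (hfk : f (k : ℤ) = 1)
    (hfrec : ∀ n : ℤ, (k : ℤ) < n → f n = ∑ j ∈ Finset.Icc (1 : ℤ) (k : ℤ), f (n - j))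
    (n : ℕ) (hn : 1 ≤ n) :
    detH n (cEntry k) = f ((k : ℤ) + n - 1) := by
  have hIcc : Finset.Icc (1 : ℤ) (k : ℤ) =
      (range k).map ⟨fun i : ℕ => (i : ℤ) + 1, show Function.Injective _ from fun a b h => by omega⟩ := by
    ext j
    simp only [Finset.mem_Icc, Finset.mem_map, Finset.mem_range,
      Function.Embedding.coeFn_mk]
    constructor
    · rintro ⟨h1, h2⟩
      exact ⟨(j - 1).toNat, by omega, by omega⟩
    · rintro ⟨i, hi, rfl⟩
      omega
  have frec' : ∀ m : ℕ, 1 ≤ m →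
      f ((k : ℤ) + m) = ∑ i ∈ range k, f ((k : ℤ) + m - 1 - i) := by
    intro m hm
    rw [hfrec ((k : ℤ) + m) (by omega), hIcc, Finset.sum_map]
    apply Finset.sum_congr rfl
    intro i _
    simp only [Function.Embedding.coeFn_mk]
    congr 1
    ring
  have key : ∀ m : ℕ, detH m (cEntry k) = f ((k : ℤ) + m - 1) := by
    intro m
    induction m using Nat.strong_induction_on with
    | _ m ih =>
      match m with
      | 0 =>
        have h1 : ((k : ℤ) + (0 : ℕ) - 1) = (k : ℤ) - 1 := by push_cast; ring
        rw [h1, hfk1]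
        simp [detH, Matrix.det_fin_zero]
      | Nat.succ m' =>
        rw [D_rec]
        have hsum : ∑ i ∈ range (min k (m' + 1)), detH (m' - i) (cEntry k)
            = ∑ i ∈ range (min k (m' + 1)), f ((k : ℤ) + m' - 1 - i) := by
          apply Finset.sum_congr rfl
          intro i hi
          simp only [Finset.mem_range, lt_min_iff] at hi
          rw [ih (m' - i) (by omega)]
          congr 1
          have : ((m' - i : ℕ) : ℤ) = (m' : ℤ) - i := by omega
          rw [this]; ring
        rw [hsum]
        cases m' with
        | zero =>
          have hmin : min k 1 = 1 := by omega
          rw [hmin]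
          simp only [Finset.sum_range_one]
          have h1 : ((k : ℤ) + (0 : ℕ) - 1 - (0 : ℕ)) = (k : ℤ) - 1 := by push_cast; ring
          have h2 : ((k : ℤ) + ((0 : ℕ) + 1 : ℕ) - 1) = (k : ℤ) := by push_cast; ring
          rw [h1, h2, hfk1, hfk]
        | succ m'' =>
          set m' := m'' + 1 with hm'
          have h2 : ((k : ℤ) + (m' + 1 : ℕ) - 1) = (k : ℤ) + m' := by push_cast; ring
          rw [h2, frec' m' (by omega)]
          rw [← Finset.sum_subset (Finset.range_subset_range.mpr (min_le_left k (m' + 1)))]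
          intro x hx hnx
          simp only [Finset.mem_range] at hx hnx
          apply hf0
          · omega
          · omega
  exact key n
end

section
/- Let k ≥ 2 be an integer, t_1, …, t_k complex numbers with t_2 ≠ 0, and n ≥ 1. Then det(B_{k,n}) = F_{k,n+1}(t). -/
open Finset

/-- Entry (i,j) (1-based) of the matrix `B_{k,n}`:
`-t_2` if `j = i+1`, `t_{i-j+1} / t_2^{i-j}` if `0 ≤ i-j < k`, and `0` otherwise. -/
noncomputable def bEntry (k : ℕ) (t : ℤ → ℂ) (i j : ℕ) : ℂ :=
  if j = i + 1 then -t 2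
  else if 0 ≤ (i : ℤ) - j ∧ (i : ℤ) - j < k then
    t ((i : ℤ) - j + 1) / t 2 ^ ((i : ℤ) - j)
  else 0

lemma bEntry_shift (k : ℕ) (t : ℤ → ℂ) (i j : ℕ) :
    bEntry k t (i+1) (j+1) = bEntry k t i j := by
  unfold bEntry
  have h1 : (j + 1 = i + 1 + 1) ↔ (j = i + 1) := by omega
  have h2 : ((i+1 : ℕ) : ℤ) - ((j+1 : ℕ) : ℤ) = (i:ℤ) - j := by push_cast; ring
  simp only [h2]
  exact if_congr h1 rfl rfl

lemma bEntry_one (k : ℕ) (t : ℤ → ℂ) (c : ℕ) :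
    bEntry k t 1 (c+2) = if c = 0 then -t 2 else 0 := by
  unfold bEntry
  rcases Nat.eq_zero_or_pos c with rfl | hc
  · norm_num
  · rw [if_neg (by omega), if_neg (by rintro ⟨h, -⟩; push_cast at h; omega),
      if_neg (by omega)]

lemma bEntry_col_one (k : ℕ) (t : ℤ → ℂ) (i : ℕ) :
    bEntry k t (i+1) 1 = if i < k then t ((i:ℤ)+1) * (t 2 ^ i)⁻¹ else 0 := by
  unfold bEntry
  rw [if_neg (by omega)]
  have h : ((i+1:ℕ):ℤ) - ((1:ℕ):ℤ) = (i:ℤ) := by push_cast; ring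
  rw [h]
  by_cases hik : i < k
  · rw [if_pos ⟨Int.natCast_nonneg i, by exact_mod_cast hik⟩, if_pos hik,
      zpow_natCast, div_eq_mul_inv]
  · rw [if_neg (by rintro ⟨-, h2⟩; exact hik (by exact_mod_cast h2)), if_neg hik]

lemma minor_det (k : ℕ) (t : ℤ → ℂ) :
    ∀ (m : ℕ) (i : Fin (m+1)),
      (Matrix.of fun r c : Fin m => bEntry k t ((i.succAbove r).1 + 1) (c.1 + 2)).det
        = (-t 2) ^ (i.1) * detH (m - i.1) (bEntry k t) := by
  intro m
  induction m with
  | zero =>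
    intro i
    have h0 : i.1 = 0 := by omega
    rw [Matrix.det_fin_zero, h0]
    simp [detH, Matrix.det_fin_zero]
  | succ m' IH =>
    intro i
    induction i using Fin.cases with
    | zero =>
      simp only [Fin.succAbove_zero, Fin.val_zero, pow_zero, one_mul, Nat.sub_zero]
      unfold detH
      congr 1
      ext r c
      simp only [Matrix.of_apply, Fin.val_succ]
      exact bEntry_shift k t (r.1+1) (c.1+1)
    | succ i' =>
      rw [Matrix.det_succ_row_zero]
      rw [Finset.sum_eq_single (0 : Fin (m'+1))]
      · have h0 : (i'.succ.succAbove 0).1 = 0 := by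
          rw [Fin.succ_succAbove_zero]; rfl
        have hminor :
            ((Matrix.of fun r c : Fin (m'+1) =>
                bEntry k t ((i'.succ.succAbove r).1 + 1) (c.1 + 2)).submatrix
              Fin.succ (0 : Fin (m'+1)).succAbove)
            = Matrix.of fun r c : Fin m' =>
                bEntry k t ((i'.succAbove r).1 + 1) (c.1 + 2) := by
          ext r c
          simp only [Matrix.submatrix_apply, Matrix.of_apply, Fin.succAbove_zero,
            Fin.succ_succAbove_succ, Fin.val_succ]
          rw [show (i'.succAbove r).1 + 1 + 1 = ((i'.succAbove r).1 + 1) + 1 from rfl,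
            show c.1 + 1 + 2 = (c.1 + 2) + 1 from rfl]
          exact bEntry_shift k t ((i'.succAbove r).1 + 1) (c.1 + 2)
        rw [hminor, IH i']
        simp only [Matrix.of_apply, h0, Fin.val_zero, pow_zero, one_mul]
        rw [show bEntry k t (0+1) ((0:ℕ)+2) = -t 2 from by
          rw [bEntry_one]; norm_num]
        rw [Fin.val_succ, pow_succ]
        have : (m' + 1) - (i'.1 + 1) = m' - i'.1 := by omega
        rw [this]
        ring
      · intro b _ hb
        have h0 : (i'.succ.succAbove 0).1 = 0 := by rw [Fin.succ_succAbove_zero]; rfl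
        simp only [Matrix.of_apply, h0]
        rw [show (0:ℕ)+1 = 1 from rfl, bEntry_one, if_neg (by
          intro h; exact hb (Fin.ext h))]
        ring
      · intro h; exact absurd (Finset.mem_univ _) h

lemma sum_Icc_one (k : ℕ) (g : ℤ → ℂ) :
    ∑ j ∈ Finset.Icc (1:ℤ) (k:ℤ), g j = ∑ i ∈ Finset.range k, g ((i:ℤ)+1) := by
  have h : Finset.Icc (1:ℤ) (k:ℤ) = (Finset.range k).image (fun i : ℕ => (i:ℤ)+1) := by
    ext x
    simp only [Finset.mem_Icc, Finset.mem_image, Finset.mem_range]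
    constructor
    · intro ⟨h1, h2⟩; exact ⟨(x-1).toNat, by omega, by omega⟩
    · rintro ⟨i, hi, rfl⟩; omega
  rw [h, Finset.sum_image]
  intro a _ b _ hab; exact_mod_cast add_right_cancel hab

theorem det_B_eq_genFibPoly (k : ℕ) (hk : 2 ≤ k) (t : ℤ → ℂ) (ht0 : t 0 = 1) (ht2 : t 2 ≠ 0)
    (F : ℤ → ℂ) (hFneg : ∀ n : ℤ, n < 1 → F n = 0) (hF1 : F 1 = 1)
    (hFrec : ∀ n : ℤ, 1 ≤ n →
      F (n + 1) = ∑ j ∈ Finset.Icc (1 : ℤ) (k : ℤ), t j * F (n + 1 - j))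
    (n : ℕ) (hn : 1 ≤ n) :
    detH n (bEntry k t) = F ((n : ℤ) + 1) := by
  suffices H : ∀ n : ℕ, detH n (bEntry k t) = F ((n:ℤ) + 1) from H n
  intro n
  induction n using Nat.strong_induction_on with
  | _ n IH =>
  rcases n with _ | m
  · rw [show ((0:ℕ):ℤ) + 1 = 1 by norm_num, hF1]
    simp [detH, Matrix.det_fin_zero]
  · set M : Matrix (Fin (m+1)) (Fin (m+1)) ℂ :=
      Matrix.of fun i j : Fin (m+1) => bEntry k t (i.1+1) (j.1+1) with hM
    have hdet : detH (m+1) (bEntry k t) = M.det := rfl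
    rw [hdet, Matrix.det_succ_column_zero]
    have hterm : ∀ i : Fin (m+1),
        (-1:ℂ)^(i.1) * M i 0 * (M.submatrix i.succAbove Fin.succ).det
          = if i.1 < k then t ((i.1:ℤ)+1) * F ((m:ℤ) + 1 - i.1) else 0 := by
      intro i
      have hsub : M.submatrix i.succAbove Fin.succ
          = Matrix.of fun r c : Fin m => bEntry k t ((i.succAbove r).1 + 1) (c.1 + 2) := rfl
      rw [hsub, minor_det k t m i]
      rw [show M i 0 = bEntry k t (i.1+1) 1 from rfl, bEntry_col_one]
      by_cases hik : i.1 < k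
      · rw [if_pos hik, if_pos hik]
        have hlt : m - i.1 < m + 1 := by omega
        have hcast : ((m - i.1 : ℕ) : ℤ) + 1 = (m:ℤ) + 1 - i.1 := by
          have := i.isLt; omega
        rw [IH (m - i.1) hlt, hcast]
        have hne : (t 2:ℂ) ^ i.1 ≠ 0 := pow_ne_zero _ ht2
        have key : (-1:ℂ)^i.1 * (-1:ℂ)^i.1 = 1 := by
          rw [← pow_add]; exact Even.neg_one_pow ⟨i.1, rfl⟩
        rw [show ((-t 2 : ℂ)) ^ i.1 = (-1:ℂ)^i.1 * t 2 ^ i.1 from by rw [neg_pow]]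
        rw [show (-1:ℂ)^i.1 * (t ((i.1:ℤ)+1) * (t 2 ^ i.1)⁻¹) *
            ((-1:ℂ)^i.1 * t 2 ^ i.1 * F ((m:ℤ) + 1 - i.1))
            = ((-1:ℂ)^i.1 * (-1:ℂ)^i.1) * ((t 2 ^ i.1)⁻¹ * t 2 ^ i.1) *
              (t ((i.1:ℤ)+1) * F ((m:ℤ) + 1 - i.1)) from by ring,
          key, inv_mul_cancel₀ hne, one_mul, one_mul]
      · rw [if_neg hik, if_neg hik]; ring
    rw [Finset.sum_congr rfl fun i _ => hterm i]
    rw [Fin.sum_univ_eq_sum_range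
      (fun i => if i < k then t ((i:ℤ)+1) * F ((m:ℤ) + 1 - i) else 0)]
    have hrec := hFrec ((m:ℤ)+1) (by omega)
    rw [show ((m+1:ℕ):ℤ) + 1 = (m:ℤ)+1+1 from by push_cast; ring, hrec]
    rw [sum_Icc_one k (fun j => t j * F ((m:ℤ)+1+1-j))]
    simp only [show ∀ i : ℕ, (m:ℤ)+1+1-((i:ℤ)+1) = (m:ℤ)+1-(i:ℤ) from fun i => by ring]
    rw [← Finset.sum_filter]
    refine Finset.sum_subset ?_ ?_
    · intro x hx
      simp only [Finset.mem_filter, Finset.mem_range] at hx ⊢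
      exact hx.2
    · intro x hx hnx
      simp only [Finset.mem_filter, Finset.mem_range] at hx hnx
      have hxm : m + 1 ≤ x := by omega
      have : F ((m:ℤ) + 1 - x) = 0 := hFneg _ (by omega)
      rw [this, mul_zero]
end

section
/- Let k ≥ 2 be an integer and n ≥ 1, and let M_{k,n} = (m_{ij}) be the n×n matrix with m_{ij} = −1 if j = i+1, m_{ij} = 1 if 0 ≤ i−j < k, and m_{ij} = 0 otherwise (1 ≤ i,j ≤ n). Then det(M_{k,n}) = f_{k,k+n−1}. -/
open Finset

/-- Entry (i,j) (1-based) of the matrix `M_{k,n}`: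
`-1` if `j = i+1`, `1` if `0 ≤ i-j < k`, and `0` otherwise. -/
noncomputable def mEntry (k : ℕ) (i j : ℕ) : ℂ :=
  if j = i + 1 then -1
  else if 0 ≤ (i : ℤ) - j ∧ (i : ℤ) - j < k then 1
  else 0

/-- Minor of `M_{k,·}` obtained by deleting column `j` (0-based) and the last row. -/
noncomputable def Bmat (k m j : ℕ) : Matrix (Fin m) (Fin m) ℂ :=
  Matrix.of fun i c => mEntry k (i.1 + 1) (if c.1 < j then c.1 + 1 else c.1 + 2)

lemma succAbove_val {m : ℕ} (j : Fin (m+1)) (c : Fin m) :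
    (Fin.succAbove j c).1 = if c.1 < j.1 then c.1 else c.1 + 1 := by
  rcases Nat.lt_or_ge c.1 j.1 with h | h
  · rw [Fin.succAbove_of_castSucc_lt _ _ (by simpa [Fin.lt_def] using h)]
    simp [h]
  · rw [Fin.succAbove_of_le_castSucc _ _ (by simpa [Fin.le_def] using h)]
    simp [Nat.not_lt.mpr h]

lemma mEntry_zero (k i j : ℕ) (h1 : j ≠ i + 1) (h2 : i < j) :
    mEntry k i j = 0 := by
  rw [mEntry, if_neg h1, if_neg]
  rintro ⟨hle, -⟩
  omega

lemma Bmat_det (k : ℕ) : ∀ m j, j ≤ m →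
    (Bmat k m j).det = (-1 : ℂ) ^ (m - j) * detH j (mEntry k) := by
  intro m
  induction m with
  | zero =>
    intro j hj
    interval_cases j
    simp [Bmat, detH]
  | succ m ih =>
    intro j hj
    rcases Nat.lt_or_ge j (m + 1) with hjm | hjm
    · -- j ≤ m : expand along the last column
      have hj' : j ≤ m := Nat.lt_succ_iff.mp hjm
      have hcond : ¬ ((Fin.last m).1 < j) := by rw [Fin.val_last]; omega
      rw [Matrix.det_succ_column (Bmat k (m+1) j) (Fin.last m)]
      have hzero : ∀ i : Fin (m+1), i ≠ Fin.last m →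
          Bmat k (m+1) j i (Fin.last m) = 0 := by
        intro i hi
        have hlt : i.1 < m + 1 := i.isLt
        have hne : i.1 ≠ m := fun h => hi (Fin.ext (by rw [h, Fin.val_last]))
        show mEntry k (i.1 + 1)
          (if (Fin.last m).1 < j then (Fin.last m).1 + 1 else (Fin.last m).1 + 2) = 0
        rw [if_neg hcond, Fin.val_last]
        exact mEntry_zero _ _ _ (by omega) (by omega)
      rw [Finset.sum_eq_single (Fin.last m)]
      · have hentry : Bmat k (m+1) j (Fin.last m) (Fin.last m) = -1 := by
          show mEntry k ((Fin.last m).1 + 1)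
            (if (Fin.last m).1 < j then (Fin.last m).1 + 1 else (Fin.last m).1 + 2) = -1
          rw [if_neg hcond, Fin.val_last, mEntry, if_pos (by omega)]
        have hsub : (Bmat k (m+1) j).submatrix (Fin.last m).succAbove
            (Fin.last m).succAbove = Bmat k m j := by
          ext i c
          simp only [Matrix.submatrix_apply, Fin.succAbove_last]
          rfl
        rw [hentry, hsub, ih j hj']
        have h2 : ((-1:ℂ)) ^ ((Fin.last m).1 + (Fin.last m).1) = 1 := by
          rw [Fin.val_last, ← two_mul, pow_mul]
          norm_num
        rw [h2, show (m + 1) - j = (m - j) + 1 by omega, pow_succ]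
        ring
      · intro i _ hi
        rw [hzero i hi]
        ring
      · intro h
        exact absurd (Finset.mem_univ _) h
    · -- j = m + 1 : Bmat is the detH matrix itself
      have hjeq : j = m + 1 := le_antisymm hj hjm
      subst hjeq
      have : Bmat k (m+1) (m+1) =
          Matrix.of fun i c : Fin (m+1) => mEntry k (i.1 + 1) (c.1 + 1) := by
        ext i c
        simp [Bmat, c.isLt, Nat.le_of_lt_succ c.isLt]
      rw [this]
      simp [detH]

lemma detH_rec (k : ℕ) (m : ℕ) :
    detH (m+1) (mEntry k) =
      ∑ j : Fin (m+1), (if m - j.1 < k then (1:ℂ) else 0) * detH j.1 (mEntry k) := by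
  rw [detH, Matrix.det_succ_row _ (Fin.last m)]
  refine Finset.sum_congr rfl fun j _ => ?_
  have hj : j.1 ≤ m := Nat.lt_succ_iff.mp j.isLt
  have hsub : (Matrix.of fun i c : Fin (m+1) => mEntry k (i.1+1) (c.1+1)).submatrix
      (Fin.last m).succAbove j.succAbove = Bmat k m j.1 := by
    ext i c
    simp only [Matrix.submatrix_apply, Matrix.of_apply, Bmat,
      Fin.succAbove_last, Fin.coe_castSucc]
    rw [succAbove_val]
    congr 1
    split <;> ring
  rw [hsub, Bmat_det k m j.1 hj]
  have hentry : (Matrix.of fun i c : Fin (m+1) => mEntry k (i.1+1) (c.1+1))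
      (Fin.last m) j = if m - j.1 < k then (1:ℂ) else 0 := by
    simp only [Matrix.of_apply, mEntry, Fin.val_last]
    split_ifs <;> first | rfl | omega
  rw [hentry]
  have hsign : ((-1:ℂ)) ^ ((Fin.last m).1 + j.1) * (-1:ℂ) ^ (m - j.1) = 1 := by
    rw [← pow_add, Fin.val_last, show m + j.1 + (m - j.1) = 2 * m by omega, pow_mul]
    norm_num
  calc (-1:ℂ) ^ ((Fin.last m).1 + j.1) * (if m - j.1 < k then (1:ℂ) else 0) *
        ((-1:ℂ) ^ (m - j.1) * detH j.1 (mEntry k))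
      = ((-1:ℂ) ^ ((Fin.last m).1 + j.1) * (-1:ℂ) ^ (m - j.1)) *
        ((if m - j.1 < k then (1:ℂ) else 0) * detH j.1 (mEntry k)) := by ring
    _ = _ := by rw [hsign, one_mul]

theorem det_M_eq_genFib (k : ℕ) (hk : 2 ≤ k)
    (f : ℤ → ℂ) (hf0 : ∀ n : ℤ, 1 ≤ n → n ≤ (k : ℤ) - 2 → f n = 0)
    (hfk1 : f ((k : ℤ) - 1) = 1) (hfk : f (k : ℤ) = 1)
    (hfrec : ∀ n : ℤ, (k : ℤ) < n → f n = ∑ j ∈ Finset.Icc (1 : ℤ) (k : ℤ), f (n - j))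
    (n : ℕ) (hn : 1 ≤ n) :
    detH n (mEntry k) = f ((k : ℤ) + n - 1) := by
  clear hn
  induction n using Nat.strong_induction_on with
  | _ n ih =>
    match n with
    | 0 =>
      simpa [detH] using hfk1.symm
    | 1 =>
      have h1 : detH 1 (mEntry k) = mEntry k 1 1 := by
        simp [detH, Matrix.det_fin_one]
      rw [h1, mEntry, if_neg (by norm_num), if_pos ⟨by norm_num, by push_cast; omega⟩]
      have harg : (k:ℤ) + ((1:ℕ):ℤ) - 1 = (k:ℤ) := by push_cast; ring
      rw [harg, hfk]
    | (m+2) =>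
      rw [detH_rec,
        Fin.sum_univ_eq_sum_range
          (fun j => (if (m+1) - j < k then (1:ℂ) else 0) * detH j (mEntry k)) (m+2)]
      have hsum : ∑ j ∈ Finset.range (m+2),
          (if (m+1) - j < k then (1:ℂ) else 0) * detH j (mEntry k)
          = ∑ j ∈ Finset.range (m+2), (if (m+1) - j < k then (1:ℂ) else 0) *
            f ((k:ℤ) + j - 1) := by
        refine Finset.sum_congr rfl fun j hj => ?_
        rw [ih j (Finset.mem_range.mp hj)]
      rw [hsum]
      have hrec := hfrec ((k:ℤ) + ((m+2:ℕ):ℤ) - 1) (by push_cast; omega)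
      rw [hrec]
      have hL : ∑ j ∈ Finset.range (m+2), (if (m+1) - j < k then (1:ℂ) else 0) *
          f ((k:ℤ) + j - 1)
          = ∑ j ∈ (Finset.range (m+2)).filter (fun j => (m+1) - j < k),
            f ((k:ℤ) + j - 1) := by
        rw [Finset.sum_filter]
        refine Finset.sum_congr rfl fun j _ => ?_
        split <;> simp
      have hR : ∑ l ∈ Finset.Icc (1:ℤ) (k:ℤ), f ((k:ℤ) + ((m+2:ℕ):ℤ) - 1 - l)
          = ∑ l ∈ (Finset.Icc (1:ℤ) (k:ℤ)).filter (fun l => l ≤ ((m+2:ℕ):ℤ)),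
            f ((k:ℤ) + ((m+2:ℕ):ℤ) - 1 - l) := by
        rw [Finset.sum_filter]
        refine Finset.sum_congr rfl fun l hl => ?_
        rcases Finset.mem_Icc.mp hl with ⟨hl1, hl2⟩
        by_cases hc : l ≤ ((m+2:ℕ):ℤ)
        · rw [if_pos hc]
        · rw [if_neg hc, hf0 _ (by push_cast; omega) (by push_cast at hc ⊢; omega)]
      rw [hL, hR]
      refine Finset.sum_nbij' (fun j => (((m+2:ℕ):ℤ) - j))
        (fun l => (((m+2:ℕ):ℤ) - l).toNat) ?_ ?_ ?_ ?_ ?_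
      · intro j hj
        simp only [Finset.mem_filter, Finset.mem_range] at hj
        simp only [Finset.mem_filter, Finset.mem_Icc]
        push_cast
        omega
      · intro l hl
        simp only [Finset.mem_filter, Finset.mem_Icc] at hl
        simp only [Finset.mem_filter, Finset.mem_range]
        push_cast at hl ⊢
        omega
      · intro j hj
        simp only [Finset.mem_filter, Finset.mem_range] at hj
        push_cast
        omega
      · intro l hl
        simp only [Finset.mem_filter, Finset.mem_Icc] at hl
        push_cast at hl ⊢
        omega
      · intro j hj
        simp only [Finset.mem_filter, Finset.mem_range] at hj
        congr 1
        push_cast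
        ring
end

section
/- Let k ≥ 2 be an integer, c_1, …, c_k complex numbers with c_2 ≠ 0, and n ≥ 1. If Q_{k,n} is formed with t_j = c_j for 1 ≤ j ≤ k, then det(Q_{k,n}) = f^1_{k,n}. -/
open Finset

lemma qEntry_pos (k : ℕ) (t : ℤ → ℂ) (r s : ℕ) (h1 : -1 ≤ (r : ℤ) - s)
    (h2 : (r : ℤ) - s < k) :
    qEntry k t r s
      = Complex.I ^ ((r : ℤ) - s).natAbs * t ((r : ℤ) - s + 1) / t 2 ^ ((r : ℤ) - s) :=
  if_pos ⟨h1, h2⟩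

lemma qEntry_zero (k : ℕ) (t : ℤ → ℂ) (r s : ℕ)
    (h : ¬(-1 ≤ (r : ℤ) - s ∧ (r : ℤ) - s < k)) :
    qEntry k t r s = 0 :=
  if_neg h

/-- Converting a sum over `Icc (1:ℤ) k` to a sum over `range k`. -/
lemma sum_Icc_int_eq_range (k : ℕ) (F : ℤ → ℂ) :
    ∑ d ∈ Finset.Icc (1 : ℤ) (k : ℤ), F d = ∑ j ∈ Finset.range k, F ((j : ℤ) + 1) := by
  refine Finset.sum_nbij' (fun d => (d - 1).toNat) (fun j => (j : ℤ) + 1) ?_ ?_ ?_ ?_ ?_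
  · intro d hd
    simp only [Finset.mem_Icc] at hd
    simp only [Finset.mem_range]
    omega
  · intro j hj
    simp only [Finset.mem_range] at hj
    simp only [Finset.mem_Icc]
    omega
  · intro d hd
    simp only [Finset.mem_Icc] at hd
    omega
  · intro j hj
    simp only [Finset.mem_range] at hj
    omega
  · intro d hd
    simp only [Finset.mem_Icc] at hd
    congr 1
    omega

theorem det_Q_eq_kSOkF (k : ℕ) (hk : 2 ≤ k) (c : ℤ → ℂ) (hc2 : c 2 ≠ 0)
    (t : ℤ → ℂ) (ht0 : t 0 = 1) (htc : ∀ j : ℤ, 1 ≤ j → j ≤ (k : ℤ) → t j = c j)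
    (f₁ : ℤ → ℂ) (hf₁zero : f₁ 0 = 1)
    (hf₁neg : ∀ n : ℤ, 1 - (k : ℤ) ≤ n → n < 0 → f₁ n = 0)
    (hf₁rec : ∀ n : ℤ, 0 < n →
      f₁ n = ∑ j ∈ Finset.Icc (1 : ℤ) (k : ℤ), c j * f₁ (n - j))
    (n : ℕ) (hn : 1 ≤ n) :
    detH n (qEntry k t) = f₁ (n : ℤ) := by
  obtain ⟨m, rfl⟩ : ∃ m, n = m + 1 := ⟨n - 1, (Nat.succ_pred_eq_of_pos hn).symm⟩
  have ht2 : t 2 = c 2 := htc 2 one_le_two (by exact_mod_cast hk)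
  have ht2' : t 2 ≠ 0 := by rw [ht2]; exact hc2
  set β : ℂ := Complex.I / t 2 with hβ
  have hβ0 : β ≠ 0 := div_ne_zero Complex.I_ne_zero ht2'
  have hβI : β * (Complex.I * t 2) = -1 := by
    rw [hβ]
    field_simp
    linear_combination Complex.I_sq
  set A : Matrix (Fin (m + 1)) (Fin (m + 1)) ℂ :=
    Matrix.of fun i j : Fin (m + 1) => qEntry k t (i.1 + 1) (j.1 + 1) with hA
  -- the key row-sum computation
  have key : ∀ r : ℕ, 1 ≤ r →
      ∑ j ∈ Finset.range r, qEntry k t r (j + 1) * (β ^ (j + 1) * f₁ (j : ℤ))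
        = β ^ r * f₁ (r : ℤ) := by
    intro r hr
    set g : ℕ → ℂ := fun j => qEntry k t r (j + 1) * (β ^ (j + 1) * f₁ (j : ℤ)) with hg
    have hrefl : ∑ j ∈ Finset.range r, g j = ∑ j ∈ Finset.range r, g (r - 1 - j) :=
      (Finset.sum_range_reflect g r).symm
    have hterm : ∀ j : ℕ, j < r → j < k →
        g (r - 1 - j) = β ^ r * (c ((j : ℤ) + 1) * f₁ ((r : ℤ) - ((j : ℤ) + 1))) := by
      intro j hjr hjk
      have h1 : r - 1 - j + 1 = r - j := by omega
      have h2 : ((r - 1 - j : ℕ) : ℤ) = (r : ℤ) - ((j : ℤ) + 1) := by omega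
      have h3 : (r : ℤ) - ((r - j : ℕ) : ℤ) = (j : ℤ) := by omega
      have hq : qEntry k t r (r - j)
          = Complex.I ^ j * c ((j : ℤ) + 1) / t 2 ^ j := by
        rw [qEntry_pos k t r (r - j) (by omega) (by omega), h3]
        simp only [Int.natAbs_natCast, zpow_natCast]
        rw [htc ((j : ℤ) + 1) (by omega) (by omega)]
      rw [hg]
      simp only [h1, h2, hq]
      have h7 : β ^ r = β ^ (r - j) * β ^ j := by
        rw [← pow_add]; congr 1; omega
      rw [h7, hβ, div_pow]
      field_simp
      ring
      rw [mul_assoc _ (t 2 ^ j), ← mul_pow, mul_inv_cancel₀ ht2', one_pow, mul_one]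
    have hzero : ∀ j : ℕ, j < r → k ≤ j → g (r - 1 - j) = 0 := by
      intro j hjr hjk
      have h1 : r - 1 - j + 1 = r - j := by omega
      rw [hg]
      simp only [h1]
      rw [qEntry_zero k t r (r - j) (by push_neg; intro _; omega), zero_mul]
    have hzero' : ∀ j : ℕ, j < k → r ≤ j →
        β ^ r * (c ((j : ℤ) + 1) * f₁ ((r : ℤ) - ((j : ℤ) + 1))) = 0 := by
      intro j hjk hjr
      have : f₁ ((r : ℤ) - ((j : ℤ) + 1)) = 0 := hf₁neg _ (by omega) (by omega)
      rw [this]; ring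
    have hmain : ∑ j ∈ Finset.range r, g (r - 1 - j)
        = ∑ j ∈ Finset.range k, β ^ r * (c ((j : ℤ) + 1) * f₁ ((r : ℤ) - ((j : ℤ) + 1))) := by
      rw [show ∑ j ∈ Finset.range r, g (r - 1 - j)
            = ∑ j ∈ Finset.range (min r k), g (r - 1 - j) from
        (Finset.sum_subset (Finset.range_subset_range.2 (min_le_left r k)) (by
          intro j hj hj'
          simp only [Finset.mem_range] at hj hj'
          exact hzero j hj (by omega))).symm]
      rw [show ∑ j ∈ Finset.range k,
            β ^ r * (c ((j : ℤ) + 1) * f₁ ((r : ℤ) - ((j : ℤ) + 1)))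
            = ∑ j ∈ Finset.range (min r k),
            β ^ r * (c ((j : ℤ) + 1) * f₁ ((r : ℤ) - ((j : ℤ) + 1))) from
        (Finset.sum_subset (Finset.range_subset_range.2 (min_le_right r k)) (by
          intro j hj hj'
          simp only [Finset.mem_range] at hj hj'
          exact hzero' j hj (by omega))).symm]
      refine Finset.sum_congr rfl fun j hj => ?_
      simp only [Finset.mem_range, lt_min_iff] at hj
      exact hterm j hj.1 hj.2
    rw [hrefl, hmain, hf₁rec r (by exact_mod_cast hr),
      sum_Icc_int_eq_range k (fun d => c d * f₁ ((r : ℤ) - d)), Finset.mul_sum]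
  -- the vector x
  set x : Fin (m + 1) → ℂ := fun s => β ^ (s.1 + 1) * f₁ (s.1 : ℤ) with hx
  have hAx : A.mulVec x = (β ^ (m + 1) * f₁ ((m : ℤ) + 1)) • (Pi.single (Fin.last m) 1 : Fin (m + 1) → ℂ) := by
    funext i
    show ∑ j : Fin (m + 1), A i j * x j = _
    have hsum : ∑ j : Fin (m + 1), A i j * x j
        = ∑ j ∈ Finset.range (m + 1),
            qEntry k t (i.1 + 1) (j + 1) * (β ^ (j + 1) * f₁ (j : ℤ)) := by
      rw [← Fin.sum_univ_eq_sum_range (fun j =>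
        qEntry k t (i.1 + 1) (j + 1) * (β ^ (j + 1) * f₁ (j : ℤ))) (m + 1)]
      rfl
    rw [hsum]
    by_cases hi : i = Fin.last m
    · subst hi
      simp only [Fin.val_last]
      rw [key (m + 1) (by omega)]
      rw [Pi.smul_apply, Pi.single_eq_same, smul_eq_mul, mul_one]
      push_cast
      ring
    · have hiv : i.1 + 1 ≤ m := by
        have h2 := i.2
        have : i.1 ≠ m := fun h => hi (Fin.ext (by simp [h]))
        omega
      have hsplit : ∑ j ∈ Finset.range (m + 1),
          qEntry k t (i.1 + 1) (j + 1) * (β ^ (j + 1) * f₁ (j : ℤ))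
          = ∑ j ∈ Finset.range (i.1 + 1 + 1),
            qEntry k t (i.1 + 1) (j + 1) * (β ^ (j + 1) * f₁ (j : ℤ)) := by
        refine (Finset.sum_subset (Finset.range_subset_range.2 (by omega)) ?_).symm
        intro j hj hj'
        simp only [Finset.mem_range] at hj hj'
        rw [qEntry_zero k t (i.1 + 1) (j + 1) (by push_neg; intro h; exfalso; omega), zero_mul]
      rw [hsplit, Finset.sum_range_succ, key (i.1 + 1) (by omega)]
      have hsup : qEntry k t (i.1 + 1) (i.1 + 1 + 1) = Complex.I * t 2 := by
        have h3 : ((i.1 + 1 : ℕ) : ℤ) - ((i.1 + 1 + 1 : ℕ) : ℤ) = -1 := by push_cast; ring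
        rw [qEntry_pos k t (i.1 + 1) (i.1 + 1 + 1) (by omega) (by omega), h3]
        norm_num [ht0]
      rw [hsup]
      have hcancel : β ^ (i.1 + 1) * f₁ ((i.1 + 1 : ℕ) : ℤ)
          + Complex.I * t 2 * (β ^ (i.1 + 1 + 1) * f₁ ((i.1 + 1 : ℕ) : ℤ)) = 0 := by
        have hb : β ^ (i.1 + 1 + 1) * (Complex.I * t 2) = -β ^ (i.1 + 1) := by
          rw [pow_succ, mul_assoc, hβI]; ring
        calc β ^ (i.1 + 1) * f₁ ((i.1 + 1 : ℕ) : ℤ)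
              + Complex.I * t 2 * (β ^ (i.1 + 1 + 1) * f₁ ((i.1 + 1 : ℕ) : ℤ))
            = β ^ (i.1 + 1) * f₁ ((i.1 + 1 : ℕ) : ℤ)
              + (β ^ (i.1 + 1 + 1) * (Complex.I * t 2)) * f₁ ((i.1 + 1 : ℕ) : ℤ) := by ring
          _ = 0 := by rw [hb]; ring
      rw [Pi.smul_apply, Pi.single_eq_of_ne hi, smul_eq_mul, mul_zero]
      exact hcancel
  -- Cramer's rule
  have hcramer : (A.updateCol 0 (A.mulVec x)).det = A.det * x 0 := by
    have h1 : Matrix.cramer A (A.mulVec x) = A.det • x := by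
      rw [Matrix.cramer_eq_adjugate_mulVec, Matrix.mulVec_mulVec, Matrix.adjugate_mul,
        Matrix.smul_mulVec, Matrix.one_mulVec]
    have h2 := congrFun h1 0
    rwa [Matrix.cramer_apply, Pi.smul_apply, smul_eq_mul] at h2
  -- the determinant of the minor column replacement
  have hminor : (A.updateCol 0 (Pi.single (Fin.last m) (1 : ℂ))).det
      = (-1) ^ m * (Complex.I * t 2) ^ m := by
    rw [Matrix.det_succ_column_zero]
    rw [Finset.sum_eq_single (Fin.last m)]
    · rw [Matrix.updateCol_self, Pi.single_eq_same, Fin.val_last, mul_one]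
      congr 1
      set B := (A.updateCol 0 (Pi.single (Fin.last m) (1 : ℂ))).submatrix
        (Fin.last m).succAbove Fin.succ with hB
      have hBij : ∀ i j : Fin m, B i j = qEntry k t (i.1 + 1) (j.1 + 2) := by
        intro i j
        rw [hB]
        show (A.updateCol 0 (Pi.single (Fin.last m) (1 : ℂ)))
          ((Fin.last m).succAbove i) (Fin.succ j) = _
        rw [Matrix.updateCol_ne (Fin.succ_ne_zero j), Fin.succAbove_last]
        show qEntry k t (i.1 + 1) (j.1 + 1 + 1) = _
        rfl
      have htri : B.BlockTriangular OrderDual.toDual := by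
        intro i j hij
        have hij' : i.1 < j.1 := hij
        rw [hBij]
        exact qEntry_zero k t (i.1 + 1) (j.1 + 2) (by push_neg; intro h; exfalso; omega)
      rw [Matrix.det_of_lowerTriangular B htri]
      have hdiag : ∀ i : Fin m, B i i = Complex.I * t 2 := by
        intro i
        have h3 : ((i.1 + 1 : ℕ) : ℤ) - ((i.1 + 2 : ℕ) : ℤ) = -1 := by push_cast; ring
        rw [hBij, qEntry_pos k t (i.1 + 1) (i.1 + 2) (by omega) (by omega), h3]
        norm_num [ht0]
      rw [Finset.prod_congr rfl fun i _ => hdiag i, Finset.prod_const, Finset.card_univ,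
        Fintype.card_fin]
    · intro b _ hb
      rw [Matrix.updateCol_self, Pi.single_eq_of_ne hb]
      ring
    · intro h
      exact absurd (Finset.mem_univ _) h
  have hdet : A.det * x 0
      = (β ^ (m + 1) * f₁ ((m : ℤ) + 1)) * ((-1) ^ m * (Complex.I * t 2) ^ m) := by
    rw [← hcramer, hAx, Matrix.det_updateCol_smul, hminor]
  have hx0 : x 0 = β := by
    show β ^ (0 + 1) * f₁ ((0 : ℕ) : ℤ) = β
    norm_num [hf₁zero]
  have hfac : (β ^ (m + 1) * f₁ ((m : ℤ) + 1)) * ((-1) ^ m * (Complex.I * t 2) ^ m)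
      = f₁ ((m : ℤ) + 1) * β := by
    have h1 : β ^ m * (Complex.I * t 2) ^ m = (-1 : ℂ) ^ m := by
      rw [← mul_pow, hβI]
    calc (β ^ (m + 1) * f₁ ((m : ℤ) + 1)) * ((-1) ^ m * (Complex.I * t 2) ^ m)
        = f₁ ((m : ℤ) + 1) * β * (β ^ m * (Complex.I * t 2) ^ m * (-1) ^ m) := by
          rw [pow_succ]; ring
      _ = f₁ ((m : ℤ) + 1) * β * ((-1 : ℂ) ^ m * (-1) ^ m) := by rw [h1]
      _ = f₁ ((m : ℤ) + 1) * β := by rw [← mul_pow]; norm_num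
  have hAdet : A.det = f₁ ((m : ℤ) + 1) := by
    rw [hx0, hfac] at hdet
    exact mul_right_cancel₀ hβ0 hdet
  show A.det = f₁ (((m + 1 : ℕ)) : ℤ)
  rw [hAdet]
  congr 1
end

section
/- Let k ≥ 2 be an integer and n ≥ 1. If Q_{k,n} is formed with t_1 = 2 and t_j = 1 for 2 ≤ j ≤ k, then det(Q_{k,n}) = p^k_{k,n+1}. -/
open Finset

lemma tri_det (b : ℤ → ℂ) (hb : ∀ d : ℤ, d ≤ -2 → b d = 0) (j : ℕ) :
    Matrix.det (Matrix.of fun p q : Fin j => b ((p : ℤ) - q - 1)) = b (-1) ^ j := by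
  rw [Matrix.det_of_lowerTriangular]
  · simp
  · intro p q h
    simp only [Matrix.of_apply]
    apply hb
    have : (p : ℤ) < q := by
      exact_mod_cast (by exact_mod_cast (OrderDual.toDual_lt_toDual.mp h) : (p : Fin j) < q)
    omega

lemma minor_det_s7 (b : ℤ → ℂ) (hb : ∀ d : ℤ, d ≤ -2 → b d = 0) (N : ℕ) (i : Fin (N + 1)) :
    Matrix.det (Matrix.of fun p q : Fin N => b (((i.succAbove p : Fin (N + 1)) : ℤ) - q - 1))
      = b (-1) ^ (i : ℕ) *
        Matrix.det (Matrix.of fun p q : Fin (N - (i : ℕ)) => b ((p : ℤ) - q)) := by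
  have hj : (i : ℕ) ≤ N := Nat.lt_succ_iff.mp i.isLt
  have hNe : (i : ℕ) + (N - (i : ℕ)) = N := by omega
  let e : Fin (i : ℕ) ⊕ Fin (N - (i : ℕ)) ≃ Fin N := finSumFinEquiv.trans (finCongr hNe)
  have hval : ∀ p : Fin N, ((i.succAbove p : Fin (N + 1)) : ℕ)
      = if (p : ℕ) < (i : ℕ) then (p : ℕ) else (p : ℕ) + 1 := by
    intro p
    rcases lt_or_ge ((p : ℕ)) ((i : ℕ)) with h | h
    · rw [Fin.succAbove_of_castSucc_lt _ _ (by simpa [Fin.lt_def] using h)]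
      simp [h]
    · rw [Fin.succAbove_of_le_castSucc _ _ (by simpa [Fin.le_def] using h)]
      simp [Nat.not_lt.mpr h]
  rw [← Matrix.det_submatrix_equiv_self e]
  have heq : (Matrix.of fun p q : Fin N =>
      b (((i.succAbove p : Fin (N + 1)) : ℤ) - q - 1)).submatrix e e =
      Matrix.fromBlocks
        (Matrix.of fun p q : Fin (i : ℕ) => b ((p : ℤ) - q - 1))
        0
        (Matrix.of fun (p : Fin (N - (i : ℕ))) (q : Fin (i : ℕ)) => b ((i : ℤ) + p - q))
        (Matrix.of fun p q : Fin (N - (i : ℕ)) => b ((p : ℤ) - q)) := by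
    ext a c
    have eval : ∀ a : Fin (i : ℕ) ⊕ Fin (N - (i : ℕ)), ((e a : Fin N) : ℕ)
        = Sum.elim (fun p : Fin (i : ℕ) => (p : ℕ))
            (fun p : Fin (N - (i : ℕ)) => (i : ℕ) + p) a := by
      rintro (p | p) <;> simp [e]
    rcases a with p | p <;> rcases c with q | q <;>
      simp only [Matrix.submatrix_apply, Matrix.of_apply, Matrix.fromBlocks_apply₁₁,
        Matrix.fromBlocks_apply₁₂, Matrix.fromBlocks_apply₂₁, Matrix.fromBlocks_apply₂₂,
        Matrix.zero_apply]
    · have h1 := hval (e (Sum.inl p))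
      rw [eval] at h1
      simp only [Sum.elim_inl, p.isLt, if_pos] at h1
      rw [h1, eval (Sum.inl q)]
      simp
    · apply hb
      have h1 := hval (e (Sum.inl p))
      rw [eval] at h1
      simp only [Sum.elim_inl, p.isLt, if_pos] at h1
      rw [h1, eval (Sum.inr q)]
      have := p.isLt
      simp only [Sum.elim_inr]
      push_cast
      omega
    · have h1 := hval (e (Sum.inr p))
      rw [eval] at h1
      rw [if_neg (Nat.not_lt.mpr (by simp [Sum.elim_inr]))] at h1
      simp only [Sum.elim_inr] at h1
      rw [h1, eval (Sum.inl q)]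
      simp only [Sum.elim_inl]
      push_cast
      ring_nf
    · have h1 := hval (e (Sum.inr p))
      rw [eval] at h1
      rw [if_neg (Nat.not_lt.mpr (by simp [Sum.elim_inr]))] at h1
      simp only [Sum.elim_inr] at h1
      rw [h1, eval (Sum.inr q)]
      simp only [Sum.elim_inr]
      push_cast
      ring_nf
  rw [heq, Matrix.det_fromBlocks_zero₁₂, tri_det b hb]

lemma hess_expand (b : ℤ → ℂ) (hb : ∀ d : ℤ, d ≤ -2 → b d = 0) (N : ℕ) :
    detH (N + 1) (fun r s => b ((r : ℤ) - s)) =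
      ∑ i : Fin (N + 1), (-1 : ℂ) ^ (i : ℕ) * b (i : ℕ) * (b (-1)) ^ (i : ℕ) *
        detH (N - (i : ℕ)) (fun r s => b ((r : ℤ) - s)) := by
  unfold detH
  rw [Matrix.det_succ_column_zero]
  refine Finset.sum_congr rfl fun i _ => ?_
  have h0 : (Matrix.of fun p q : Fin (N + 1) =>
      b (((p : ℕ) + 1 : ℕ) - (((q : ℕ) + 1 : ℕ)) : ℤ)) i 0 = b (i : ℕ) := by
    simp only [Matrix.of_apply]
    congr 1
    push_cast [Fin.val_zero]
    ring
  have hsub : ((Matrix.of fun p q : Fin (N + 1) =>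
      b ((((p : ℕ) + 1 : ℕ) : ℤ) - (((q : ℕ) + 1 : ℕ) : ℤ))).submatrix i.succAbove Fin.succ)
      = Matrix.of fun p q : Fin N => b (((i.succAbove p : Fin (N + 1)) : ℤ) - q - 1) := by
    ext p q
    simp only [Matrix.submatrix_apply, Matrix.of_apply]
    congr 1
    push_cast [Fin.val_succ]
    ring
  rw [h0, hsub, minor_det_s7 b hb N i]
  have : Matrix.det (Matrix.of fun p q : Fin (N - (i : ℕ)) => b ((p : ℤ) - q))
      = Matrix.det (Matrix.of fun p q : Fin (N - (i : ℕ)) =>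
          b ((((p : ℕ) + 1 : ℕ) : ℤ) - (((q : ℕ) + 1 : ℕ) : ℤ))) := by
    congr 1
    ext p q
    simp only [Matrix.of_apply]
    congr 1
    push_cast
    ring
  rw [this]
  ring

theorem det_Q_eq_kSOkP (k : ℕ) (hk : 2 ≤ k) (t : ℤ → ℂ) (ht0 : t 0 = 1) (ht1 : t 1 = 2)
    (ht : ∀ j : ℤ, 2 ≤ j → j ≤ (k : ℤ) → t j = 1)
    (p : ℤ → ℂ) (hpinit : p (1 - (k : ℤ)) = 1)
    (hpzero : ∀ n : ℤ, 1 - (k : ℤ) < n → n ≤ 0 → p n = 0)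
    (hprec : ∀ n : ℤ, 0 < n →
      p n = 2 * p (n - 1) + ∑ j ∈ Finset.Icc (2 : ℤ) (k : ℤ), p (n - j))
    (n : ℕ) (hn : 1 ≤ n) :
    detH n (qEntry k t) = p ((n : ℤ) + 1) := by
  have hk2 : (2 : ℤ) ≤ (k : ℤ) := by exact_mod_cast hk
  have ht2 : t 2 = 1 := ht 2 le_rfl hk2
  set b : ℤ → ℂ := fun d =>
    if -1 ≤ d ∧ d < (k : ℤ) then Complex.I ^ d.natAbs * t (d + 1) / t 2 ^ d else 0 with hbdef
  have hqb : qEntry k t = fun r s : ℕ => b ((r : ℤ) - s) := rfl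
  have hb : ∀ d : ℤ, d ≤ -2 → b d = 0 := by
    intro d hd
    simp only [hbdef]
    rw [if_neg]
    rintro ⟨h1, -⟩
    omega
  have hbneg : b (-1) = Complex.I := by
    simp only [hbdef]
    rw [if_pos ⟨le_refl _, by omega⟩]
    norm_num [ht0, ht2]
  have hb0 : b 0 = 2 := by
    simp only [hbdef]
    rw [if_pos ⟨by norm_num, by omega⟩]
    norm_num [ht1, ht2]
  have hbpos : ∀ m : ℕ, 1 ≤ m → m < k → b (m : ℤ) = Complex.I ^ m := by
    intro m h1 h2
    simp only [hbdef]
    rw [if_pos ⟨by omega, by exact_mod_cast h2⟩]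
    rw [ht ((m : ℤ) + 1) (by omega) (by omega), ht2]
    simp
  have hbk : ∀ m : ℕ, k ≤ m → b (m : ℤ) = 0 := by
    intro m hm
    simp only [hbdef]
    rw [if_neg]
    rintro ⟨-, h2⟩
    omega
  have hcoef : ∀ m : ℕ, (-1 : ℂ) ^ m * b (m : ℤ) * (b (-1)) ^ m
      = if m = 0 then 2 else if m < k then 1 else 0 := by
    intro m
    rcases Nat.eq_zero_or_pos m with rfl | hm
    · simp [hb0]
    · rw [if_neg (by omega)]
      rcases lt_or_ge m k with h | h
      · rw [if_pos h, hbneg, hbpos m hm h, ← mul_pow, ← mul_pow]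
        have : (-1 : ℂ) * Complex.I * Complex.I = 1 := by
          rw [mul_assoc, Complex.I_mul_I]; ring
        rw [this, one_pow]
      · rw [if_neg (by omega), hbk m h]
        ring
  have hp1 : p 1 = 1 := by
    have h0 : p (1 - 1) = 0 := by
      rw [show (1 : ℤ) - 1 = 0 by ring]; exact hpzero 0 (by omega) le_rfl
    rw [hprec 1 one_pos, h0]
    rw [Finset.sum_eq_single_of_mem (k : ℤ) (by simp [Finset.mem_Icc]; omega)]
    · norm_num [hpinit]
    · intro j hj hne
      simp only [Finset.mem_Icc] at hj
      exact hpzero (1 - j) (by omega) (by omega)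
  have key : ∀ n : ℕ, detH n (qEntry k t) = p ((n : ℤ) + 1) := by
    intro n
    induction n using Nat.strong_induction_on with
    | _ n IH =>
      match n with
      | 0 => simpa [detH] using hp1.symm
      | Nat.succ N =>
        rw [hqb, hess_expand b hb N,
          show ((N.succ : ℕ) : ℤ) + 1 = (N : ℤ) + 1 + 1 by push_cast; ring]
        have hterm : ∀ i : Fin (N + 1),
            (-1 : ℂ) ^ (i : ℕ) * b ((i : ℕ) : ℤ) * (b (-1)) ^ (i : ℕ) *
              detH (N - (i : ℕ)) (fun r s => b ((r : ℤ) - s))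
            = (if (i : ℕ) = 0 then 2 else if (i : ℕ) < k then 1 else 0) *
              p ((N : ℤ) - (i : ℕ) + 1) := by
          intro i
          rw [hcoef, ← hqb, IH (N - (i : ℕ)) (by omega)]
          congr 2
          have := i.isLt
          omega
        rw [Finset.sum_congr rfl (fun i _ => hterm i)]
        rw [Fin.sum_univ_eq_sum_range
          (fun i => (if i = 0 then 2 else if i < k then 1 else 0) * p ((N : ℤ) - i + 1))]
        rw [Finset.sum_range_succ']
        simp only [if_pos rfl, Nat.cast_zero]
        rw [hprec ((N : ℤ) + 1 + 1) (by omega)]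
        have e1 : (N : ℤ) + 1 + 1 - 1 = (N : ℤ) - 0 + 1 := by ring
        rw [e1]
        rw [add_comm (∑ i ∈ Finset.range N, _)]
        congr 1
        -- remaining sums
        have hif : ∀ i : ℕ,
            (if i + 1 = 0 then (2 : ℂ) else if i + 1 < k then 1 else 0) *
              p ((N : ℤ) - (i + 1 : ℕ) + 1)
            = if i + 1 < k then p ((N : ℤ) - i) else 0 := by
          intro i
          rw [if_neg (Nat.succ_ne_zero i)]
          split
          · rw [one_mul]
            congr 1
            push_cast
            ring
          · rw [zero_mul]
        rw [Finset.sum_congr rfl (fun i _ => hif i)]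
        have hinj : Function.Injective (fun i : ℕ => (i : ℤ) + 2) := by
          intro a b h; simpa using h
        have hmap : Finset.Icc (2 : ℤ) (k : ℤ)
            = Finset.map ⟨fun i : ℕ => (i : ℤ) + 2, hinj⟩
                (Finset.range (k - 1)) := by
          ext x
          simp only [Finset.mem_Icc, Finset.mem_map, Finset.mem_range,
            Function.Embedding.coeFn_mk]
          constructor
          · rintro ⟨h1, h2⟩
            exact ⟨(x - 2).toNat, by omega, by omega⟩
          · rintro ⟨a, ha, rfl⟩
            omega
        rw [hmap, Finset.sum_map]
        simp only [Function.Embedding.coeFn_mk]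
        have hred : ∀ i ∈ Finset.range (k - 1),
            p ((N : ℤ) + 1 + 1 - ((i : ℤ) + 2)) = if i + 1 < k then p ((N : ℤ) - i) else 0 := by
          intro i hi
          simp only [Finset.mem_range] at hi
          rw [if_pos (by omega)]
          congr 1
          ring
        rw [Finset.sum_congr rfl hred]
        set g : ℕ → ℂ := fun i => if i + 1 < k then p ((N : ℤ) - i) else 0 with hg
        have hsub1 : ∑ i ∈ Finset.range N, g i
            = ∑ i ∈ Finset.range (max N (k - 1)), g i := by
          apply Finset.sum_subset
          · exact Finset.range_subset_range.mpr (le_max_left _ _)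
          · intro i hi hni
            simp only [Finset.mem_range, not_lt] at hi hni
            simp only [hg]
            split
            · exact hpzero _ (by omega) (by omega)
            · rfl
        have hsub2 : ∑ i ∈ Finset.range (k - 1), g i
            = ∑ i ∈ Finset.range (max N (k - 1)), g i := by
          apply Finset.sum_subset
          · exact Finset.range_subset_range.mpr (le_max_right _ _)
          · intro i hi hni
            simp only [Finset.mem_range, not_lt] at hi hni
            simp only [hg]
            rw [if_neg (by omega)]
        rw [hsub1, ← hsub2]
  exact key n
end

section
/- Let A_n = (a_{ij}) be an n×n lower Hessenberg matrix (over the complex numbers) for n ≥ 1, and for 0 ≤ r ≤ n let A_r denote its leading principal r×r submatrix, with per(A_0) = 1. Then per(A_1) = a_{11}, and for n ≥ 2, per(A_n) = a_{n,n}·per(A_{n−1}) + Σ_{r=1}^{n−1} ( a_{n,r} · ∏_{j=r}^{n−1} a_{j,j+1} · per(A_{r−1}) ). -/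
open Finset Equiv

noncomputable def perH (m : ℕ) (a : ℕ → ℕ → ℂ) : ℂ :=
  ∑ σ : Equiv.Perm (Fin m), ∏ i : Fin m, a (i.1 + 1) ((σ i).1 + 1)

noncomputable def Gh (a : ℕ → ℕ → ℂ) (k : ℕ) (b : ℕ → ℂ) : ℂ :=
  ∑ σ : Equiv.Perm (Fin (k + 1)),
    (∏ i : Fin k, a (i.1 + 1) ((σ i.castSucc).1 + 1)) * b ((σ (Fin.last k)).1 + 1)

lemma Gh_step (n : ℕ) (a : ℕ → ℕ → ℂ)
    (hHess : ∀ i j : ℕ, 1 ≤ i → i ≤ n → 1 ≤ j → j ≤ n → i + 1 < j → a i j = 0)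
    (j : ℕ) (hj : j + 2 ≤ n) (b : ℕ → ℂ) :
    Gh a (j + 1) b = b (j + 2) * perH (j + 1) a + a (j + 1) (j + 2) * Gh a j b := by
  classical
  set E : Option (Fin (j + 1)) × Perm (Fin (j + 1)) ≃ Perm (Fin (j + 2)) :=
    Equiv.Perm.decomposeOption.symm.trans finSuccEquivLast.symm.permCongr with hE
  have hlast : ∀ p (e : Perm (Fin (j + 1))),
      (E (p, e)) (Fin.last (j + 1)) = finSuccEquivLast.symm p := by
    intro p e
    simp [hE, Equiv.permCongr_apply, Equiv.Perm.decomposeOption_symm_apply]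
  have hcast : ∀ p (e : Perm (Fin (j + 1))) (i : Fin (j + 1)),
      (E (p, e)) i.castSucc = finSuccEquivLast.symm (Equiv.swap none p (some (e i))) := by
    intro p e i
    simp [hE, Equiv.permCongr_apply, Equiv.Perm.decomposeOption_symm_apply]
  rw [Gh, ← Equiv.sum_comp E, Fintype.sum_prod_type, Fintype.sum_option]
  congr 1
  · -- p = none case
    rw [perH, Finset.mul_sum]
    refine Finset.sum_congr rfl fun e _ => ?_
    rw [hlast]
    simp only [hcast, Equiv.swap_self, Equiv.refl_apply, finSuccEquivLast_symm_some,
      finSuccEquivLast_symm_none, Fin.coe_castSucc, Fin.val_last]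
    ring
  · -- p = some q case
    have key : ∀ (q : Fin (j + 1)) (e : Perm (Fin (j + 1))),
        ((∏ i : Fin (j + 1), a (i.1 + 1) (((E (some q, e)) i.castSucc).1 + 1)) *
          b (((E (some q, e)) (Fin.last (j + 1))).1 + 1)) =
        if e (Fin.last j) = q then
          a (j + 1) (j + 2) *
            ((∏ i : Fin j, a (i.1 + 1) ((e i.castSucc).1 + 1)) * b ((e (Fin.last j)).1 + 1))
        else 0 := by
      intro q e
      have hc : ∀ i : Fin (j + 1), (E (some q, e)) i.castSucc =
          if e i = q then Fin.last (j + 1) else (e i).castSucc := by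
        intro i
        rw [hcast]
        by_cases h : e i = q
        · simp [h]
        · rw [Equiv.swap_apply_of_ne_of_ne (by simp) (by simpa using h)]
          simp only [finSuccEquivLast_symm_some]
          rw [if_neg h]
      by_cases hq : e (Fin.last j) = q
      · rw [if_pos hq, hlast, Fin.prod_univ_castSucc]
        have h1 : ∀ i : Fin j, (E (some q, e)) i.castSucc.castSucc = (e i.castSucc).castSucc := by
          intro i
          rw [hc]
          have : e i.castSucc ≠ q := by
            rw [← hq]
            intro h
            have := e.injective h
            exact absurd (congrArg Fin.val this) (by simp [Fin.val_last]; omega)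
          simp [this]
        have h2 : (E (some q, e)) (Fin.last j).castSucc = Fin.last (j + 1) := by
          rw [hc, if_pos hq]
        rw [h2]
        simp only [h1, Fin.coe_castSucc, Fin.val_last, finSuccEquivLast_symm_some]
        rw [hq]
        ring
      · rw [if_neg hq]
        have hmem : (e.symm q : Fin (j + 1)) ∈ Finset.univ := Finset.mem_univ _
        refine mul_eq_zero_of_left (Finset.prod_eq_zero hmem ?_) _
        have heq : e (e.symm q) = q := e.apply_symm_apply q
        rw [hc, if_pos heq, Fin.val_last]
        have hlt : (e.symm q : Fin (j + 1)).1 < j := by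
          rcases lt_or_eq_of_le (Nat.lt_succ_iff.mp (e.symm q).2) with h | h
          · exact h
          · exfalso; apply hq
            have : (e.symm q : Fin (j+1)) = Fin.last j := Fin.ext (by simpa using h)
            rw [← this, heq]
        exact hHess _ _ (by omega) (by omega) (by omega) (by omega) (by omega)
    calc ∑ q : Fin (j + 1), ∑ e : Perm (Fin (j + 1)),
          ((∏ i : Fin (j + 1), a (i.1 + 1) (((E (some q, e)) i.castSucc).1 + 1)) *
            b (((E (some q, e)) (Fin.last (j + 1))).1 + 1))
        = ∑ e : Perm (Fin (j + 1)), ∑ q : Fin (j + 1),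
            if e (Fin.last j) = q then
              a (j + 1) (j + 2) *
                ((∏ i : Fin j, a (i.1 + 1) ((e i.castSucc).1 + 1)) * b ((e (Fin.last j)).1 + 1))
            else 0 := by
          rw [Finset.sum_comm]
          exact Finset.sum_congr rfl fun e _ => Finset.sum_congr rfl fun q _ => key q e
      _ = a (j + 1) (j + 2) * Gh a j b := by
          rw [Gh, Finset.mul_sum]
          refine Finset.sum_congr rfl fun e _ => ?_
          rw [Finset.sum_ite_eq, if_pos (Finset.mem_univ _)]

lemma perH_zero (a : ℕ → ℕ → ℂ) : perH 0 a = 1 := by simp [perH]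

lemma perH_succ (k : ℕ) (a : ℕ → ℕ → ℂ) : perH (k + 1) a = Gh a k (a (k + 1)) := by
  unfold perH Gh
  refine Finset.sum_congr rfl fun σ _ => ?_
  rw [Fin.prod_univ_castSucc]
  simp

lemma Gh_zero (a : ℕ → ℕ → ℂ) (b : ℕ → ℂ) : Gh a 0 b = b 1 := by
  simp [Gh]

lemma Gh_formula (n : ℕ) (a : ℕ → ℕ → ℂ)
    (hHess : ∀ i j : ℕ, 1 ≤ i → i ≤ n → 1 ≤ j → j ≤ n → i + 1 < j → a i j = 0)
    (k : ℕ) (hk : k + 1 ≤ n) (b : ℕ → ℂ) :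
    Gh a k b = ∑ r ∈ Finset.Icc 1 (k + 1),
      b r * (∏ j ∈ Finset.Icc r k, a j (j + 1)) * perH (r - 1) a := by
  induction k with
  | zero =>
      rw [Gh_zero]
      simp [perH_zero]
  | succ j ih =>
      rw [Gh_step n a hHess j hk b, ih (by omega)]
      rw [Finset.sum_Icc_succ_top (by omega : 1 ≤ j + 1 + 1)]
      have htop : b (j + 1 + 1) * (∏ i ∈ Finset.Icc (j + 1 + 1) (j + 1), a i (i + 1)) *
          perH (j + 1 + 1 - 1) a = b (j + 2) * perH (j + 1) a := by
        rw [Finset.Icc_eq_empty (by omega)]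
        simp
      rw [htop, Finset.mul_sum, add_comm]
      congr 1
      refine Finset.sum_congr rfl fun r hr => ?_
      have hr' : r ≤ j + 1 := by
        rcases Finset.mem_Icc.mp hr with ⟨_, h⟩; omega
      rw [Finset.prod_Icc_succ_top hr']
      ring


/-- Permanent expansion of a lower Hessenberg matrix along its last row.
Here `a` gives the (1-based) entries of the matrix, `perH m a` is the permanent
of the leading principal `m × m` submatrix (so `perH 0 a = 1`). -/
theorem hessenberg_per_expansion (n : ℕ) (hn : 1 ≤ n) (a : ℕ → ℕ → ℂ)
    (hHess : ∀ i j : ℕ, 1 ≤ i → i ≤ n → 1 ≤ j → j ≤ n → i + 1 < j → a i j = 0) :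
    perH 1 a = a 1 1 ∧
    (2 ≤ n →
      perH n a = a n n * perH (n - 1) a +
        ∑ r ∈ Finset.Icc 1 (n - 1),
          a n r * (∏ j ∈ Finset.Icc r (n - 1), a j (j + 1)) * perH (r - 1) a) := by
  constructor
  · rw [show (1 : ℕ) = 0 + 1 from rfl, perH_succ, Gh_zero]
  · intro h2
    obtain ⟨m, rfl⟩ : ∃ m, n = m + 2 := ⟨n - 2, by omega⟩
    have h1 : m + 2 - 1 = m + 1 := by omega
    rw [h1, show m + 2 = (m + 1) + 1 from rfl, perH_succ,
      Gh_formula (m + 2) a hHess (m + 1) (by omega)]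
    rw [Finset.sum_Icc_succ_top (by omega : 1 ≤ m + 1 + 1)]
    have htop : a (m + 1 + 1) (m + 1 + 1) *
        (∏ j ∈ Finset.Icc (m + 1 + 1) (m + 1), a j (j + 1)) * perH (m + 1 + 1 - 1) a =
        a (m + 2) (m + 2) * perH (m + 1) a := by
      rw [Finset.Icc_eq_empty (by omega)]
      simp
    rw [htop, add_comm]
end

section
/- Let k ≥ 2 be an integer and n ≥ 1, and let H_{k,n} = (h_{rs}) be the n×n complex matrix with h_{rs} = i^{r−s} if −1 ≤ r−s < k and h_{rs} = 0 otherwise (1 ≤ r,s ≤ n), where i = √−1. Then per(H_{k,n}) = f_{k,k+n−1}. -/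
open Finset

noncomputable def hcEntry (k : ℕ) (r s : ℕ) : ℂ :=
  if -1 ≤ (r : ℤ) - s ∧ (r : ℤ) - s < k then
    Complex.I ^ ((r : ℤ) - s)
  else 0

def IsGood (k n : ℕ) (σ : Equiv.Perm (Fin n)) : Prop :=
  ∀ i : Fin n, (σ i).1 ≤ i.1 + 1 ∧ i.1 < (σ i).1 + k

instance (k n : ℕ) : DecidablePred (IsGood k n) := fun _ => by
  unfold IsGood; infer_instance

lemma prod_hc (k n : ℕ) (σ : Equiv.Perm (Fin n)) :
    (∏ i : Fin n, hcEntry k (i.1 + 1) ((σ i).1 + 1)) =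
      if IsGood k n σ then 1 else 0 := by
  by_cases hg : IsGood k n σ
  · rw [if_pos hg]
    have hfac : ∀ i : Fin n, hcEntry k (i.1 + 1) ((σ i).1 + 1)
        = Complex.I ^ ((i.1 : ℤ)) * (Complex.I ^ (((σ i).1 : ℤ)))⁻¹ := by
      intro i
      have h1 := (hg i).1
      have h2 := (hg i).2
      rw [hcEntry, if_pos (by push_cast; omega)]
      have : ((i.1 + 1 : ℕ) : ℤ) - ((σ i).1 + 1 : ℕ) = (i.1 : ℤ) - ((σ i).1 : ℤ) := by
        push_cast; ring
      rw [this, zpow_sub₀ Complex.I_ne_zero, div_eq_mul_inv]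
    rw [Finset.prod_congr rfl (fun i _ => hfac i), Finset.prod_mul_distrib,
      Finset.prod_inv_distrib]
    rw [Equiv.prod_comp σ (fun i : Fin n => Complex.I ^ ((i.1 : ℤ)))]
    apply mul_inv_cancel₀
    exact Finset.prod_ne_zero_iff.mpr fun i _ => zpow_ne_zero _ Complex.I_ne_zero
  · rw [if_neg hg]
    rw [IsGood] at hg
    push_neg at hg
    obtain ⟨i, hi⟩ := hg
    apply Finset.prod_eq_zero (Finset.mem_univ i)
    rw [hcEntry, if_neg]
    push_cast
    omega

lemma perH_eq_card (k n : ℕ) :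
    perH n (hcEntry k) = ((Finset.univ.filter (IsGood k n)).card : ℂ) := by
  rw [perH]
  rw [Finset.sum_congr rfl (fun σ _ => prod_hc k n σ)]
  rw [Finset.sum_boole]

variable {n v m : ℕ}

def extFun (n v m : ℕ) (h : v + 1 + m = n) (τ : Equiv.Perm (Fin m)) (i : Fin n) : Fin n :=
  if h1 : i.1 < v then ⟨i.1 + 1, by omega⟩
  else if h2 : i.1 = v then ⟨0, by omega⟩
  else ⟨v + 1 + (τ ⟨i.1 - (v + 1), by have := i.2; omega⟩).1, by
    have := (τ ⟨i.1 - (v + 1), by have := i.2; omega⟩).2; omega⟩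

def extInv (n v m : ℕ) (h : v + 1 + m = n) (τ : Equiv.Perm (Fin m)) (i : Fin n) : Fin n :=
  if h1 : i.1 = 0 then ⟨v, by omega⟩
  else if h2 : i.1 ≤ v then ⟨i.1 - 1, by have := i.2; omega⟩
  else ⟨v + 1 + (τ.symm ⟨i.1 - (v + 1), by have := i.2; omega⟩).1, by
    have := (τ.symm ⟨i.1 - (v + 1), by have := i.2; omega⟩).2; omega⟩

lemma extFun_lt (h : v + 1 + m = n) (τ : Equiv.Perm (Fin m)) (i : Fin n) (hi : i.1 < v) :
    (extFun n v m h τ i).1 = i.1 + 1 := by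
  rw [extFun, dif_pos hi]

lemma extFun_eq (h : v + 1 + m = n) (τ : Equiv.Perm (Fin m)) (i : Fin n) (hi : i.1 = v) :
    (extFun n v m h τ i).1 = 0 := by
  rw [extFun, dif_neg (by omega : ¬ i.1 < v), dif_pos hi]

lemma extFun_gt (h : v + 1 + m = n) (τ : Equiv.Perm (Fin m)) (i : Fin n) (hi : v < i.1) :
    (extFun n v m h τ i).1 = v + 1 + (τ ⟨i.1 - (v + 1), by have := i.2; omega⟩).1 := by
  rw [extFun, dif_neg (by omega : ¬ i.1 < v), dif_neg (by omega : ¬ i.1 = v)]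

lemma extInv_eq0 (h : v + 1 + m = n) (τ : Equiv.Perm (Fin m)) (i : Fin n) (hi : i.1 = 0) :
    (extInv n v m h τ i).1 = v := by
  rw [extInv, dif_pos hi]

lemma extInv_le (h : v + 1 + m = n) (τ : Equiv.Perm (Fin m)) (i : Fin n)
    (hi0 : i.1 ≠ 0) (hi : i.1 ≤ v) : (extInv n v m h τ i).1 = i.1 - 1 := by
  rw [extInv, dif_neg hi0, dif_pos hi]

lemma extInv_gt (h : v + 1 + m = n) (τ : Equiv.Perm (Fin m)) (i : Fin n) (hi : v < i.1) :
    (extInv n v m h τ i).1 = v + 1 + (τ.symm ⟨i.1 - (v + 1), by have := i.2; omega⟩).1 := by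
  rw [extInv, dif_neg (by omega : ¬ i.1 = 0), dif_neg (by omega : ¬ i.1 ≤ v)]

def extPerm (n v m : ℕ) (h : v + 1 + m = n) (τ : Equiv.Perm (Fin m)) :
    Equiv.Perm (Fin n) where
  toFun := extFun n v m h τ
  invFun := extInv n v m h τ
  left_inv := by
    intro i
    apply Fin.ext
    rcases Nat.lt_trichotomy i.1 v with h1 | h1 | h1
    · rw [extInv_le h τ _ (by rw [extFun_lt h τ i h1]; omega)
        (by rw [extFun_lt h τ i h1]; omega), extFun_lt h τ i h1]
      omega
    · rw [extInv_eq0 h τ _ (extFun_eq h τ i h1), h1]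
    · have hj : i.1 - (v + 1) < m := by have := i.2; omega
      set jj : Fin m := ⟨i.1 - (v + 1), hj⟩ with hjj
      have hval : (extFun n v m h τ i).1 = v + 1 + (τ jj).1 := extFun_gt h τ i h1
      have hgt : v < (extFun n v m h τ i).1 := by omega
      have pf : (extFun n v m h τ i).1 - (v + 1) < m := by
        have := (extFun n v m h τ i).2; omega
      have harg : (⟨(extFun n v m h τ i).1 - (v + 1), pf⟩ : Fin m) = τ jj := by
        apply Fin.ext
        show (extFun n v m h τ i).1 - (v + 1) = (τ jj).1
        omega
      have h6 : (extInv n v m h τ (extFun n v m h τ i)).1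
          = v + 1 + (τ.symm ⟨(extFun n v m h τ i).1 - (v + 1), pf⟩).1 :=
        extInv_gt h τ _ hgt
      rw [harg, Equiv.symm_apply_apply] at h6
      have : jj.1 = i.1 - (v + 1) := rfl
      omega
  right_inv := by
    intro i
    apply Fin.ext
    rcases Nat.eq_zero_or_pos i.1 with h1 | h1
    · rw [extFun_eq h τ _ (extInv_eq0 h τ i h1), h1]
    · rcases Nat.lt_or_ge v i.1 with h2 | h2
      · have hj : i.1 - (v + 1) < m := by have := i.2; omega
        set jj : Fin m := ⟨i.1 - (v + 1), hj⟩ with hjj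
        have hval : (extInv n v m h τ i).1 = v + 1 + (τ.symm jj).1 := extInv_gt h τ i h2
        have hgt : v < (extInv n v m h τ i).1 := by omega
        have pf : (extInv n v m h τ i).1 - (v + 1) < m := by
          have := (extInv n v m h τ i).2; omega
        have harg : (⟨(extInv n v m h τ i).1 - (v + 1), pf⟩ : Fin m) = τ.symm jj := by
          apply Fin.ext
          show (extInv n v m h τ i).1 - (v + 1) = (τ.symm jj).1
          omega
        have h6 : (extFun n v m h τ (extInv n v m h τ i)).1
            = v + 1 + (τ ⟨(extInv n v m h τ i).1 - (v + 1), pf⟩).1 :=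
          extFun_gt h τ _ hgt
        rw [harg, Equiv.apply_symm_apply] at h6
        have : jj.1 = i.1 - (v + 1) := rfl
        omega
      · rw [extFun_lt h τ _ (by rw [extInv_le h τ i (by omega) h2]; omega),
          extInv_le h τ i (by omega) h2]
        omega

lemma extPerm_apply_lt (h : v + 1 + m = n) (τ : Equiv.Perm (Fin m)) (i : Fin n)
    (hi : i.1 < v) : ((extPerm n v m h τ) i).1 = i.1 + 1 := extFun_lt h τ i hi

lemma extPerm_apply_eq (h : v + 1 + m = n) (τ : Equiv.Perm (Fin m)) (i : Fin n)
    (hi : i.1 = v) : ((extPerm n v m h τ) i).1 = 0 := extFun_eq h τ i hi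

lemma extPerm_apply_gt (h : v + 1 + m = n) (τ : Equiv.Perm (Fin m)) (i : Fin n)
    (hi : v < i.1) :
    ((extPerm n v m h τ) i).1 = v + 1 + (τ ⟨i.1 - (v + 1), by have := i.2; omega⟩).1 :=
  extFun_gt h τ i hi

def Ngood (k n : ℕ) : ℕ := (Finset.univ.filter (IsGood k n)).card

lemma forced_prefix (n : ℕ) (σ : Equiv.Perm (Fin n))
    (hσ : ∀ i : Fin n, (σ i).1 ≤ i.1 + 1) (v : Fin n) (hv : (σ v).1 = 0) :
    (∀ i : Fin n, i.1 < v.1 → (σ i).1 = i.1 + 1) ∧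
    (∀ i : Fin n, v.1 < i.1 → v.1 < (σ i).1) := by
  have main : ∀ c : ℕ, ∀ i : Fin n, i.1 = c → i.1 < v.1 → (σ i).1 = i.1 + 1 := by
    intro c
    induction c using Nat.strong_induction_on with
    | _ c ih =>
      intro i hic hiv
      by_contra hne
      have hle : (σ i).1 ≤ i.1 + 1 := hσ i
      rcases Nat.eq_zero_or_pos (σ i).1 with h0 | h0
      · have : σ i = σ v := Fin.ext (by rw [h0, hv])
        have : i = v := σ.injective this
        omega
      · have hjb : (σ i).1 - 1 < n := by have := (σ i).2; omega
        set j : Fin n := ⟨(σ i).1 - 1, hjb⟩ with hj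
        have hjc : j.1 < c := by have : j.1 = (σ i).1 - 1 := rfl; omega
        have hjv : j.1 < v.1 := by have : j.1 = (σ i).1 - 1 := rfl; omega
        have hσj : (σ j).1 = j.1 + 1 := ih j.1 hjc j rfl hjv
        have : σ j = σ i := Fin.ext (by
          rw [hσj]
          show j.1 + 1 = (σ i).1
          have : j.1 = (σ i).1 - 1 := rfl
          omega)
        have hji : j = i := σ.injective this
        have : j.1 = (σ i).1 - 1 := rfl
        omega
  refine ⟨fun i hi => main i.1 i rfl hi, fun i hi => ?_⟩
  by_contra hle
  push_neg at hle
  rcases Nat.eq_zero_or_pos (σ i).1 with h0 | h0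
  · have : σ i = σ v := Fin.ext (by rw [h0, hv])
    have : i = v := σ.injective this
    omega
  · have hjb : (σ i).1 - 1 < n := by have := (σ i).2; omega
    set j : Fin n := ⟨(σ i).1 - 1, hjb⟩ with hj
    have hj1 : j.1 = (σ i).1 - 1 := rfl
    have hσj : (σ j).1 = j.1 + 1 := main j.1 j rfl (by omega)
    have : σ j = σ i := Fin.ext (by rw [hσj]; show j.1 + 1 = (σ i).1; omega)
    have hji : j = i := σ.injective this
    omega

lemma fiber_card (k n : ℕ) (v : Fin n) (hvk : v.1 < k) :
    ((Finset.univ : Finset (Equiv.Perm (Fin n))).filter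
        (fun σ => IsGood k n σ ∧ (σ v).1 = 0)).card = Ngood k (n - (v.1 + 1)) := by
  have h : v.1 + 1 + (n - (v.1 + 1)) = n := by have := v.2; omega
  set m : ℕ := n - (v.1 + 1) with hm
  rw [Ngood]
  symm
  apply Finset.card_bij (fun τ _ => extPerm n v.1 m h τ)
  · -- membership
    intro τ hτ
    rw [Finset.mem_filter] at hτ ⊢
    obtain ⟨-, hτg⟩ := hτ
    refine ⟨Finset.mem_univ _, ?_, ?_⟩
    · intro i
      rcases Nat.lt_trichotomy i.1 v.1 with h1 | h1 | h1
      · have := extPerm_apply_lt h τ i h1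
        omega
      · have := extPerm_apply_eq h τ i h1
        omega
      · have hj : i.1 - (v.1 + 1) < m := by have := i.2; omega
        set jj : Fin m := ⟨i.1 - (v.1 + 1), hj⟩ with hjj
        have hval : (extPerm n v.1 m h τ i).1 = v.1 + 1 + (τ jj).1 :=
          extPerm_apply_gt h τ i h1
        have hjv : jj.1 = i.1 - (v.1 + 1) := rfl
        have h2 := hτg jj
        omega
    · have : ((extPerm n v.1 m h τ) ⟨v.1, v.2⟩).1 = 0 :=
        extPerm_apply_eq h τ _ rfl
      have hv : (⟨v.1, v.2⟩ : Fin n) = v := Fin.ext rfl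
      rwa [hv] at this
  · -- injectivity
    intro τ1 h1 τ2 h2 heq
    apply Equiv.ext
    intro j
    have hib : v.1 + 1 + j.1 < n := by have := j.2; omega
    set i : Fin n := ⟨v.1 + 1 + j.1, hib⟩ with hi
    have hi1 : i.1 = v.1 + 1 + j.1 := rfl
    have hgt : v.1 < i.1 := by omega
    have hj : i.1 - (v.1 + 1) < m := by have := i.2; omega
    have harg : (⟨i.1 - (v.1 + 1), hj⟩ : Fin m) = j := Fin.ext (by
      show i.1 - (v.1 + 1) = j.1; omega)
    have e1 : (extPerm n v.1 m h τ1 i).1 = v.1 + 1 + (τ1 ⟨i.1 - (v.1 + 1), hj⟩).1 :=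
      extPerm_apply_gt h τ1 i hgt
    have e2 : (extPerm n v.1 m h τ2 i).1 = v.1 + 1 + (τ2 ⟨i.1 - (v.1 + 1), hj⟩).1 :=
      extPerm_apply_gt h τ2 i hgt
    rw [harg] at e1 e2
    have : extPerm n v.1 m h τ1 i = extPerm n v.1 m h τ2 i := by rw [heq]
    have hvals : (extPerm n v.1 m h τ1 i).1 = (extPerm n v.1 m h τ2 i).1 := by rw [this]
    exact Fin.ext (by omega)
  · -- surjectivity
    intro σ hσ
    rw [Finset.mem_filter] at hσ
    obtain ⟨-, hσg, hσv⟩ := hσ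
    have hforced := forced_prefix n σ (fun i => (hσg i).1) v hσv
    have hib : ∀ j : Fin m, v.1 + 1 + j.1 < n := fun j => by have := j.2; omega
    set idx : Fin m → Fin n := fun j => ⟨v.1 + 1 + j.1, hib j⟩ with hidxdef
    have hidxval : ∀ j, (idx j).1 = v.1 + 1 + j.1 := fun j => rfl
    have htail : ∀ j : Fin m, v.1 < (σ (idx j)).1 := by
      intro j
      exact hforced.2 _ (by rw [hidxval]; omega)
    have htb : ∀ j : Fin m, (σ (idx j)).1 - (v.1 + 1) < m := by
      intro j
      have := (σ (idx j)).2
      have := j.2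
      omega
    set t : Fin m → Fin m := fun j => ⟨(σ (idx j)).1 - (v.1 + 1), htb j⟩ with ht
    have htval : ∀ j, (t j).1 = (σ (idx j)).1 - (v.1 + 1) := fun j => rfl
    have htinj : Function.Injective t := by
      intro j1 j2 hteq
      have hv1 := htail j1
      have hv2 := htail j2
      have hveq : (t j1).1 = (t j2).1 := by rw [hteq]
      rw [htval, htval] at hveq
      have hseq : σ (idx j1) = σ (idx j2) := Fin.ext (by omega)
      have := congrArg Fin.val (σ.injective hseq)
      rw [hidxval, hidxval] at this
      exact Fin.ext (by omega)
    set τ : Equiv.Perm (Fin m) :=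
      Equiv.ofBijective t (Finite.injective_iff_bijective.mp htinj) with hτdef
    have hτapp : ∀ j, τ j = t j := fun j => rfl
    refine ⟨τ, ?_, ?_⟩
    · rw [Finset.mem_filter]
      refine ⟨Finset.mem_univ _, fun j => ?_⟩
      rw [hτapp, htval]
      have hv1 := htail j
      have hg1 := (hσg (idx j)).1
      have hg2 := (hσg (idx j)).2
      rw [hidxval] at hg1 hg2
      omega
    · apply Equiv.ext
      intro i
      apply Fin.ext
      rcases Nat.lt_trichotomy i.1 v.1 with h1 | h1 | h1
      · rw [extPerm_apply_lt h τ i h1]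
        exact (hforced.1 i h1).symm
      · rw [extPerm_apply_eq h τ i h1]
        have : i = v := Fin.ext h1
        rw [this, hσv]
      · have hj : i.1 - (v.1 + 1) < m := by have := i.2; omega
        set jj : Fin m := ⟨i.1 - (v.1 + 1), hj⟩ with hjj
        have hval : (extPerm n v.1 m h τ i).1 = v.1 + 1 + (τ jj).1 :=
          extPerm_apply_gt h τ i h1
        rw [hval, hτapp, htval]
        have hjv : jj.1 = i.1 - (v.1 + 1) := rfl
        have hidx2 : idx jj = i := Fin.ext (by rw [hidxval]; omega)
        have hv1 := htail jj
        rw [hidx2] at hv1 ⊢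
        omega

lemma Ngood_zero (k : ℕ) : Ngood k 0 = 1 := by
  rw [Ngood]
  have hall : ∀ σ : Equiv.Perm (Fin 0), IsGood k 0 σ := fun σ i => i.elim0
  rw [Finset.filter_true_of_mem (fun σ _ => hall σ)]
  simp

lemma Ngood_rec (k n : ℕ) (hn : 0 < n) :
    Ngood k n = ∑ v : Fin n, (if v.1 < k then Ngood k (n - (v.1 + 1)) else 0) := by
  rw [Ngood]
  rw [Finset.card_eq_sum_card_fiberwise
    (f := fun σ : Equiv.Perm (Fin n) => σ.symm ⟨0, hn⟩) (t := Finset.univ)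
    (fun σ _ => Finset.mem_univ _)]
  apply Finset.sum_congr rfl
  intro w _
  rw [Finset.filter_filter]
  by_cases hwk : w.1 < k
  · rw [if_pos hwk, ← fiber_card k n w hwk]
    congr 1
    apply Finset.filter_congr
    intro σ _
    constructor
    · rintro ⟨hg, hs⟩
      refine ⟨hg, ?_⟩
      rw [← hs, Equiv.apply_symm_apply]
    · rintro ⟨hg, hs⟩
      refine ⟨hg, ?_⟩
      rw [Equiv.symm_apply_eq]
      exact (Fin.ext hs.symm : (⟨0, hn⟩ : Fin n) = σ w)
  · rw [if_neg hwk, Finset.card_eq_zero, Finset.filter_eq_empty_iff]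
    intro σ _
    rintro ⟨hg, hs⟩
    have h1 : σ w = ⟨0, hn⟩ := by rw [← hs, Equiv.apply_symm_apply]
    have h2 := (hg w).2
    have h3 : (σ w).1 = 0 := by rw [h1]
    omega

theorem per_H_eq_genFib (k : ℕ) (hk : 2 ≤ k)
    (f : ℤ → ℂ) (hf0 : ∀ n : ℤ, 1 ≤ n → n ≤ (k : ℤ) - 2 → f n = 0)
    (hfk1 : f ((k : ℤ) - 1) = 1) (hfk : f (k : ℤ) = 1)
    (hfrec : ∀ n : ℤ, (k : ℤ) < n → f n = ∑ j ∈ Finset.Icc (1 : ℤ) (k : ℤ), f (n - j))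
    (n : ℕ) (hn : 1 ≤ n) :
    perH n (hcEntry k) = f ((k : ℤ) + n - 1) := by
  have main : ∀ N : ℕ, 1 ≤ N → (Ngood k N : ℂ) = f ((k : ℤ) + N - 1) := by
    intro N
    induction N using Nat.strong_induction_on with
    | _ N ih =>
      intro hN
      rcases eq_or_lt_of_le hN with h1 | h2
      · -- N = 1
        rw [← h1]
        have hN1 : Ngood k 1 = 1 := by
          rw [Ngood_rec k 1 one_pos, Fin.sum_univ_one]
          rw [if_pos (by omega : (0 : Fin 1).1 < k)]
          exact Ngood_zero k
        rw [hN1]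
        have : (k : ℤ) + (1 : ℕ) - 1 = (k : ℤ) := by push_cast; ring
        rw [this, hfk]
        norm_num
      · -- N ≥ 2
        rw [Ngood_rec k N (by omega)]
        push_cast
        rw [Fin.sum_univ_eq_sum_range
          (fun x => if x < k then (Ngood k (N - (x + 1)) : ℂ) else 0) N]
        set M := min N k with hM
        have hfilter : Finset.filter (fun x => x < k) (Finset.range N)
            = Finset.range M := by
          ext x
          simp only [Finset.mem_filter, Finset.mem_range, hM]
          omega
        rw [← Finset.sum_filter, hfilter]
        rw [hfrec ((k : ℤ) + N - 1) (by omega)]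
        have hsub : ∑ j ∈ Finset.Icc (1 : ℤ) (M : ℤ), f ((k : ℤ) + N - 1 - j)
            = ∑ j ∈ Finset.Icc (1 : ℤ) (k : ℤ), f ((k : ℤ) + N - 1 - j) := by
          apply Finset.sum_subset
          · intro x hx
            simp only [Finset.mem_Icc] at hx ⊢
            have : (M : ℤ) = min (N : ℤ) (k : ℤ) := by push_cast [hM]; rfl
            omega
          · intro x hx hnx
            simp only [Finset.mem_Icc] at hx hnx
            have hMZ : (M : ℤ) = min (N : ℤ) (k : ℤ) := by push_cast [hM]; rfl
            apply hf0 <;> omega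
        rw [← hsub]
        apply Finset.sum_nbij' (i := fun (x : ℕ) => (x : ℤ) + 1)
          (j := fun (j : ℤ) => (j - 1).toNat)
        · intro x hx
          simp only [Finset.mem_range] at hx
          simp only [Finset.mem_Icc]
          omega
        · intro j hj
          simp only [Finset.mem_Icc] at hj
          simp only [Finset.mem_range]
          omega
        · intro x _
          omega
        · intro j hj
          simp only [Finset.mem_Icc] at hj
          omega
        · intro x hx
          simp only [Finset.mem_range, hM] at hx
          rcases Nat.lt_or_ge (x + 1) N with hxN | hxN
          · have hge : 1 ≤ N - (x + 1) := by omega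
            have := ih (N - (x + 1)) (by omega) hge
            rw [this]
            congr 1
            have : ((N - (x + 1) : ℕ) : ℤ) = (N : ℤ) - (x + 1) := by
              push_cast [Nat.cast_sub (by omega : x + 1 ≤ N)]
              ring
            rw [this]
            ring
          · have hxN' : x + 1 = N := by omega
            rw [hxN', Nat.sub_self, Ngood_zero]
            have : (k : ℤ) + N - 1 - ((x : ℤ) + 1) = (k : ℤ) - 1 := by omega
            rw [this, hfk1]
            norm_num
  rw [perH_eq_card]
  exact main n hn
end

section
/- Let k ≥ 2 be an integer, t_1, …, t_k complex numbers with t_2 ≠ 0, and n ≥ 1. Then per(L_{k,n}) = F_{k,n+1}(t). -/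
open Finset

/-- Entry (i,j) (1-based) of the matrix `L_{k,n}`:
`t_{i-j+1} / t_2^{i-j}` if `-1 ≤ i-j < k`, and `0` otherwise. -/
noncomputable def lEntry (k : ℕ) (t : ℤ → ℂ) (i j : ℕ) : ℂ :=
  if -1 ≤ (i : ℤ) - j ∧ (i : ℤ) - j < k then
    t ((i : ℤ) - j + 1) / t 2 ^ ((i : ℤ) - j)
  else 0

noncomputable def perM {m : ℕ} (A : Matrix (Fin m) (Fin m) ℂ) : ℂ :=
  ∑ σ : Equiv.Perm (Fin m), ∏ i : Fin m, A i (σ i)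

theorem perM_one (A : Matrix (Fin 1) (Fin 1) ℂ) : perM A = A 0 0 := by
  rw [perM]
  rw [Finset.sum_eq_single (1 : Equiv.Perm (Fin 1))]
  · simp
  · intro b _ hb
    exact absurd (Subsingleton.elim b 1) hb
  · simp

theorem perM_succ_row_zero {n : ℕ} (A : Matrix (Fin (n + 1)) (Fin (n + 1)) ℂ) :
    perM A = ∑ j : Fin (n + 1), A 0 j * perM (A.submatrix Fin.succ j.succAbove) := by
  rw [perM, Finset.univ_perm_fin_succ, ← Finset.univ_product_univ]
  simp only [Finset.sum_map, Equiv.toEmbedding_apply, Finset.sum_product]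
  refine Finset.sum_congr rfl fun j _ => Fin.cases ?_ (fun j => ?_) j
  · rw [perM, Finset.mul_sum]
    refine Finset.sum_congr rfl fun σ _ => ?_
    rw [Fin.prod_univ_succ]
    simp [Matrix.submatrix]
  · rw [perM, Finset.mul_sum]
    have key : ∀ σ : Equiv.Perm (Fin n),
        (∏ i, A i (Equiv.Perm.decomposeFin.symm (j.succ, σ) i)) =
          A 0 j.succ * ∏ i, A i.succ (j.succ.succAbove ((j.cycleRange * σ) i)) := by
      intro σ
      rw [Fin.prod_univ_succ, Equiv.Perm.decomposeFin_symm_apply_zero]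
      congr 1
      refine Finset.prod_congr rfl fun i _ => ?_
      rw [Equiv.Perm.decomposeFin_symm_apply_succ, Equiv.Perm.mul_apply,
        Fin.succAbove_cycleRange]
    calc (∑ σ : Equiv.Perm (Fin n), ∏ i, A i (Equiv.Perm.decomposeFin.symm (j.succ, σ) i))
        = ∑ σ : Equiv.Perm (Fin n),
            A 0 j.succ * ∏ i, A i.succ (j.succ.succAbove ((j.cycleRange * σ) i)) := by
          exact Finset.sum_congr rfl fun σ _ => key σ
      _ = ∑ σ : Equiv.Perm (Fin n),
            A 0 j.succ * ∏ i, A i.succ (j.succ.succAbove (σ i)) := by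
          exact Equiv.sum_comp (Equiv.mulLeft j.cycleRange)
            (fun σ => A 0 j.succ * ∏ i, A i.succ (j.succ.succAbove (σ i)))
      _ = ∑ σ : Equiv.Perm (Fin n),
            A 0 j.succ * ∏ i, (A.submatrix Fin.succ j.succ.succAbove) i (σ i) := rfl

/-- The auxiliary matrix family `C_{m,r}`. -/
noncomputable def cMat (k : ℕ) (t : ℤ → ℂ) (m r : ℕ) : Matrix (Fin m) (Fin m) ℂ :=
  fun i j => if j.1 = 0 then lEntry k t (i.1 + 1 + r) 1 else lEntry k t (i.1 + 1 + r) (j.1 + 1 + r)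

theorem lEntry_diff (k : ℕ) (t : ℤ → ℂ) {i j i' j' : ℕ}
    (h : (i : ℤ) - j = (i' : ℤ) - j') : lEntry k t i j = lEntry k t i' j' := by
  rw [lEntry, lEntry, h]

theorem lEntry_zero (k : ℕ) (t : ℤ → ℂ) {i j : ℕ} (h : (i : ℤ) - j < -1) :
    lEntry k t i j = 0 := by
  rw [lEntry, if_neg]
  rintro ⟨h1, -⟩
  omega

theorem lEntry_one_two (k : ℕ) (t : ℤ → ℂ) (ht0 : t 0 = 1) : lEntry k t 1 2 = t 2 := by
  rw [lEntry, if_pos]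
  · norm_num [ht0]
  · constructor
    · norm_num
    · push_cast; omega

theorem perM_cMat_succ (k : ℕ) (t : ℤ → ℂ) (ht0 : t 0 = 1) (m r : ℕ) :
    perM (cMat k t (m + 2) r) =
      lEntry k t (1 + r) 1 * perM (cMat k t (m + 1) 0) +
        t 2 * perM (cMat k t (m + 1) (r + 1)) := by
  have hM0 : (cMat k t (m + 2) r).submatrix Fin.succ ((0 : Fin (m + 2)).succAbove)
      = cMat k t (m + 1) 0 := by
    ext i j
    simp only [Matrix.submatrix_apply, Fin.succAbove_zero, cMat, Fin.val_succ]
    rw [if_neg (Nat.succ_ne_zero j.1)]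
    by_cases hj : j.1 = 0
    · rw [if_pos hj, hj]
      exact lEntry_diff _ _ (by push_cast; ring)
    · rw [if_neg hj]
      exact lEntry_diff _ _ (by push_cast; ring)
  have hM1 : (cMat k t (m + 2) r).submatrix Fin.succ ((Fin.succ (0 : Fin (m + 1))).succAbove)
      = cMat k t (m + 1) (r + 1) := by
    ext i j
    refine Fin.cases ?_ (fun j => ?_) j
    · have hsa : (Fin.succ (0 : Fin (m + 1))).succAbove 0 = 0 := by
        rw [Fin.succAbove_of_castSucc_lt _ _ (by simp [Fin.lt_def])]
        rfl
      simp only [Matrix.submatrix_apply, hsa, cMat, Fin.val_zero, Fin.val_succ, if_pos rfl,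
        if_true]
      exact lEntry_diff _ _ (by push_cast; ring)
    · have hsa : (Fin.succ (0 : Fin (m + 1))).succAbove j.succ = j.succ.succ := by
        rw [Fin.succAbove_of_le_castSucc _ _ (by simp [Fin.le_def])]
      simp only [Matrix.submatrix_apply, hsa, cMat, Fin.val_succ]
      rw [if_neg (Nat.succ_ne_zero _), if_neg (Nat.succ_ne_zero _)]
      exact lEntry_diff _ _ (by push_cast; ring)
  have h00 : cMat k t (m + 2) r 0 0 = lEntry k t (1 + r) 1 := by
    simp only [cMat, Fin.val_zero, if_pos rfl]
    exact lEntry_diff _ _ (by push_cast; ring)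
  have h01 : cMat k t (m + 2) r 0 (Fin.succ 0) = lEntry k t 1 2 := by
    simp only [cMat, Fin.val_zero, Fin.val_succ]
    simp only [Nat.zero_add, Nat.one_ne_zero, if_false]
    exact lEntry_diff _ _ (by push_cast; ring)
  have hrest : ∀ j : Fin m, cMat k t (m + 2) r 0 (Fin.succ (Fin.succ j)) = 0 := by
    intro j
    simp only [cMat, Fin.val_zero, Fin.val_succ]
    rw [if_neg (Nat.succ_ne_zero _)]
    exact lEntry_zero k t (by push_cast; omega)
  rw [perM_succ_row_zero, Fin.sum_univ_succ, Fin.sum_univ_succ]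
  rw [h00, h01, hM0, hM1]
  have : ∀ j : Fin m,
      cMat k t (m + 2) r 0 (Fin.succ (Fin.succ j)) *
        perM ((cMat k t (m + 2) r).submatrix Fin.succ (Fin.succ (Fin.succ j)).succAbove) = 0 := by
    intro j
    rw [hrest j, zero_mul]
  rw [Finset.sum_congr rfl fun j _ => this j, Finset.sum_const_zero, add_zero,
    lEntry_one_two k t ht0]

theorem pow_mul_lEntry (k : ℕ) (t : ℤ → ℂ) (ht2 : t 2 ≠ 0) (r : ℕ) :
    t 2 ^ r * lEntry k t (1 + r) 1 = if (r : ℤ) + 1 ≤ (k : ℤ) then t ((r : ℤ) + 1) else 0 := by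
  rw [lEntry, show ((1 + r : ℕ) : ℤ) - ((1 : ℕ) : ℤ) = (r : ℤ) by push_cast; ring]
  by_cases h : (r : ℤ) + 1 ≤ (k : ℤ)
  · rw [if_pos (by omega : (-1 : ℤ) ≤ r ∧ (r : ℤ) < k), if_pos h, zpow_natCast, mul_comm,
      div_mul_cancel₀ _ (pow_ne_zero r ht2)]
  · rw [if_neg (by omega), if_neg h, mul_zero]

theorem cMat_formula (k : ℕ) (t : ℤ → ℂ) (ht0 : t 0 = 1) (ht2 : t 2 ≠ 0)
    (F : ℤ → ℂ) (hFneg : ∀ n : ℤ, n < 1 → F n = 0) (hF1 : F 1 = 1)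
    (hFrec : ∀ n : ℤ, 1 ≤ n →
      F (n + 1) = ∑ j ∈ Finset.Icc (1 : ℤ) (k : ℤ), t j * F (n + 1 - j)) :
    ∀ m r : ℕ, t 2 ^ r * perM (cMat k t (m + 1) r) =
      ∑ j ∈ Finset.Icc ((r : ℤ) + 1) (k : ℤ), t j * F ((m : ℤ) + r + 2 - j) := by
  intro m
  induction m with
  | zero =>
    intro r
    rw [perM_one]
    have hc : cMat k t 1 r 0 0 = lEntry k t (1 + r) 1 := by
      simp only [cMat, Fin.val_zero, if_pos rfl]
      exact lEntry_diff _ _ (by push_cast; ring)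
    rw [hc, pow_mul_lEntry k t ht2 r]
    by_cases h : (r : ℤ) + 1 ≤ (k : ℤ)
    · rw [if_pos h, Finset.sum_eq_single_of_mem ((r : ℤ) + 1)
        (Finset.mem_Icc.mpr ⟨le_refl _, h⟩)]
      · rw [show ((0 : ℕ) : ℤ) + r + 2 - ((r : ℤ) + 1) = 1 by push_cast; ring, hF1, mul_one]
      · intro b hb hne
        rw [hFneg, mul_zero]
        have := (Finset.mem_Icc.mp hb).1
        omega
    · rw [if_neg h, Finset.Icc_eq_empty (by omega), Finset.sum_empty]
  | succ m ih =>
    intro r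
    have hL : perM (cMat k t (m + 1) 0) = F ((m : ℤ) + 2) := by
      have h0 := ih 0
      norm_num at h0
      rw [h0, show ((m : ℤ) + 2) = ((m : ℤ) + 1) + 1 by ring, hFrec ((m : ℤ) + 1) (by omega)]
    have h2 : t 2 ^ r * (t 2 * perM (cMat k t (m + 1) (r + 1)))
        = t 2 ^ (r + 1) * perM (cMat k t (m + 1) (r + 1)) := by ring
    rw [perM_cMat_succ k t ht0 m r, mul_add, ← mul_assoc (t 2 ^ r), h2, ih (r + 1), hL,
      pow_mul_lEntry k t ht2 r]
    by_cases h : (r : ℤ) + 1 ≤ (k : ℤ)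
    · rw [if_pos h]
      have hins : Finset.Icc ((r : ℤ) + 1) (k : ℤ)
          = insert ((r : ℤ) + 1) (Finset.Icc ((r : ℤ) + 2) (k : ℤ)) := by
        ext x
        simp only [Finset.mem_insert, Finset.mem_Icc]
        omega
      rw [hins, Finset.sum_insert (by simp only [Finset.mem_Icc]; omega)]
      have hIcc : Finset.Icc (((r + 1 : ℕ) : ℤ) + 1) (k : ℤ)
          = Finset.Icc ((r : ℤ) + 2) (k : ℤ) := by
        ext x
        simp only [Finset.mem_Icc]
        omega
      rw [hIcc]
      simp only [show ∀ x : ℤ, ((m + 1 : ℕ) : ℤ) + (r : ℤ) + 2 - x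
          = (m : ℤ) + ((r + 1 : ℕ) : ℤ) + 2 - x from fun x => by omega,
        show ((m : ℤ) + ((r + 1 : ℕ) : ℤ) + 2 - ((r : ℤ) + 1)) = (m : ℤ) + 2 from by omega]
    · rw [if_neg h, Finset.Icc_eq_empty (by omega), Finset.sum_empty, zero_mul, zero_add,
        Finset.Icc_eq_empty (by omega), Finset.sum_empty]

theorem per_L_eq_genFibPoly (k : ℕ) (hk : 2 ≤ k) (t : ℤ → ℂ) (ht0 : t 0 = 1) (ht2 : t 2 ≠ 0)
    (F : ℤ → ℂ) (hFneg : ∀ n : ℤ, n < 1 → F n = 0) (hF1 : F 1 = 1)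
    (hFrec : ∀ n : ℤ, 1 ≤ n →
      F (n + 1) = ∑ j ∈ Finset.Icc (1 : ℤ) (k : ℤ), t j * F (n + 1 - j))
    (n : ℕ) (hn : 1 ≤ n) :
    perH n (lEntry k t) = F ((n : ℤ) + 1) := by
  have hP : perH n (lEntry k t) = perM (cMat k t n 0) := by
    rw [perH, perM]
    refine Finset.sum_congr rfl fun σ _ => Finset.prod_congr rfl fun i _ => ?_
    simp only [cMat]
    split_ifs with h
    · rw [h]
    · exact lEntry_diff _ _ (by push_cast; ring)
  obtain ⟨m, rfl⟩ : ∃ m, n = m + 1 := ⟨n - 1, by omega⟩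
  have hL : perM (cMat k t (m + 1) 0) = F ((m : ℤ) + 2) := by
    have h0 := cMat_formula k t ht0 ht2 F hFneg hF1 hFrec m 0
    rw [pow_zero, one_mul] at h0
    norm_num at h0
    rw [h0, show ((m : ℤ) + 2) = ((m : ℤ) + 1) + 1 by ring, hFrec ((m : ℤ) + 1) (by omega)]
  rw [hP, hL]
  congr 1
end
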